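/- arXiv:1905.00343 — 6 statements merged into one kernel-verified Lean document; each statement's English description precedes it below -/
import Mathlib

section
/- (Mahler's determinant theorem.) Let K be a field of characteristic zero, let α₁, …, α_s ∈ K be distinct, and let n = (n₁, …, n_s) ∈ ℕ^s have all coordinates positive. Then the determinant of the s×s matrix whose i-th row is a_{n−e_i} equals ∏_{i=1}^s ( (n_i − 1)! · ∏_{k≠i} (α_i − α_k)^{n_k} ), and in particular it is nonzero. -/
open Polynomial

/-- `f_m(z) = ∏ᵢ (z − αᵢ)^{mᵢ}`. -/
noncomputable def fpoly {K : Type*} [Field K] {s : ℕ} (α : Fin s → K) (m : Fin s → ℕ) :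
    K[X] := ∏ i, (X - C (α i)) ^ m i

/-- `P_m(z) = Σ_{k=0}^{M} f_m^{(k)}(z)`, the sum of `f_m` and all its derivatives. -/
noncomputable def Ppoly {K : Type*} [Field K] {s : ℕ} (α : Fin s → K) (m : Fin s → ℕ) :
    K[X] := ∑ k ∈ Finset.range (∑ i, m i + 1), derivative^[k] (fpoly α m)

/-- The Hermite approximation `a_m = (P_m(α₁), …, P_m(α_s))`. -/
noncomputable def aH {K : Type*} [Field K] {s : ℕ} (α : Fin s → K) (m : Fin s → ℕ) :
    Fin s → K := fun i => (Ppoly α m).eval (α i)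

namespace MahlerAux

open Finset

variable {K : Type*} [Field K] {s : ℕ}

lemma eval_iter_deriv_of_lt (a : K) (m : ℕ) (q : K[X]) {t : ℕ} (ht : t < m) :
    Polynomial.eval a (derivative^[t] ((X - C a) ^ m * q)) = 0 := by
  have h := Polynomial.aeval_iterate_derivative_of_lt (R := K) (A := K)
    ((X - C a) ^ m * q) m a (p' := q)
    (by rw [Algebra.algebraMap_self, Polynomial.map_id]) ht
  simpa [Polynomial.aeval_def, Polynomial.eval₂_eq_eval_map, Algebra.algebraMap_self,
    Polynomial.map_id] using h

lemma eval_iter_deriv_self (a : K) (m : ℕ) (q : K[X]) :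
    Polynomial.eval a (derivative^[m] ((X - C a) ^ m * q)) =
      (m.factorial : K) * Polynomial.eval a q := by
  have h := Polynomial.aeval_iterate_derivative_self (R := K) (A := K)
    ((X - C a) ^ m * q) m a (p' := q)
    (by rw [Algebra.algebraMap_self, Polynomial.map_id])
  simpa [Polynomial.aeval_def, Polynomial.eval₂_eq_eval_map, Algebra.algebraMap_self,
    Polynomial.map_id, nsmul_eq_mul] using h

lemma degree_iter_deriv_le (p : K[X]) (k : ℕ) : (derivative^[k] p).degree ≤ p.degree := by
  induction k with
  | zero => simp
  | succ k ih => rw [Function.iterate_succ_apply']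
                 exact (Polynomial.degree_derivative_le).trans ih

noncomputable def Qp (α : Fin s → K) (n : Fin s → ℕ) (j : Fin s) : K[X] :=
  ∏ k ∈ Finset.univ.erase j, (X - C (α k)) ^ n k

noncomputable def hp (α : Fin s → K) (n : Fin s → ℕ) (j : Fin s) (r : ℕ) : K[X] :=
  (X - C (α j)) ^ (n j - 1 - r) * Qp α n j

lemma hp_factor_ne (α : Fin s → K) (n : Fin s → ℕ) {j k : Fin s} (hkj : k ≠ j) (r : ℕ) :
    ∃ q : K[X], hp α n j r = (X - C (α k)) ^ n k * q := by
  refine ⟨(X - C (α j)) ^ (n j - 1 - r) * ∏ i ∈ (Finset.univ.erase j).erase k,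
    (X - C (α i)) ^ n i, ?_⟩
  rw [hp, Qp, ← Finset.mul_prod_erase _ _ (Finset.mem_erase.2 ⟨hkj, Finset.mem_univ k⟩)]
  ring

lemma natDegree_hp_lt (α : Fin s → K) (n : Fin s → ℕ) (hn : ∀ i, 0 < n i) (j : Fin s) (r : ℕ) :
    (hp α n j r).natDegree < ∑ i, n i := by
  have h1 : (hp α n j r).natDegree ≤ (n j - 1 - r) + ∑ k ∈ Finset.univ.erase j, n k := by
    refine (Polynomial.natDegree_mul_le).trans (add_le_add ?_ ?_)
    · exact (Polynomial.natDegree_pow_le).trans (by simp)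
    · refine (Polynomial.natDegree_prod_le _ _).trans ?_
      exact Finset.sum_le_sum fun k _ => (Polynomial.natDegree_pow_le).trans (by simp)
  have h2 : (∑ k ∈ Finset.univ.erase j, n k) + n j = ∑ i, n i :=
    Finset.sum_erase_add _ _ (Finset.mem_univ j)
  have h3 := hn j
  omega

lemma eval_hp_ne (α : Fin s → K) (n : Fin s → ℕ) {j k : Fin s} (hkj : k ≠ j) (r : ℕ)
    {u : ℕ} (hu : u < n k) : Polynomial.eval (α k) (derivative^[u] (hp α n j r)) = 0 := by
  obtain ⟨q, hq⟩ := hp_factor_ne α n hkj r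
  rw [hq]; exact eval_iter_deriv_of_lt _ _ _ hu

lemma eval_hp_self_lt (α : Fin s → K) (n : Fin s → ℕ) (j : Fin s) (r : ℕ)
    {u : ℕ} (hu : u < n j - 1 - r) :
    Polynomial.eval (α j) (derivative^[u] (hp α n j r)) = 0 :=
  eval_iter_deriv_of_lt _ _ _ hu

lemma eval_hp_self_eq (α : Fin s → K) (n : Fin s → ℕ) (j : Fin s) (r : ℕ) :
    Polynomial.eval (α j) (derivative^[n j - 1 - r] (hp α n j r)) =
      ((n j - 1 - r).factorial : K) * Polynomial.eval (α j) (Qp α n j) :=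
  eval_iter_deriv_self _ _ _

lemma fpoly_eq_hp (α : Fin s → K) (n : Fin s → ℕ) (j : Fin s) :
    (∏ i, (X - C (α i)) ^ (n i - if i = j then 1 else 0)) = hp α n j 0 := by
  rw [← Finset.mul_prod_erase _ _ (Finset.mem_univ j), if_pos rfl, hp, Qp, Nat.sub_zero]
  congr 1
  exact Finset.prod_congr rfl fun k hk => by
    rw [if_neg (Finset.mem_erase.1 hk).1, Nat.sub_zero]

lemma sum_sub_ite (n : Fin s → ℕ) (hn : ∀ i, 0 < n i) (j : Fin s) :
    (∑ k, (n k - if k = j then 1 else 0)) + 1 = ∑ i, n i := by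
  rw [← Finset.sum_erase_add _ _ (Finset.mem_univ j), ← Finset.sum_erase_add _ (fun k => n k) (Finset.mem_univ j)]
  rw [if_pos rfl]
  have : ∑ k ∈ Finset.univ.erase j, (n k - if k = j then 1 else 0)
      = ∑ k ∈ Finset.univ.erase j, n k :=
    Finset.sum_congr rfl fun k hk => by rw [if_neg (Finset.mem_erase.1 hk).1, Nat.sub_zero]
  rw [this]
  have := hn j
  omega

lemma eval_Qp (α : Fin s → K) (n : Fin s → ℕ) (j : Fin s) :
    Polynomial.eval (α j) (Qp α n j) = ∏ k ∈ Finset.univ.erase j, (α j - α k) ^ n k := by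
  simp [Qp, Polynomial.eval_prod]

lemma degree_sumIDeriv_le (p : K[X]) : (sumIDeriv p).degree ≤ p.degree := by
  rw [sumIDeriv_apply]
  exact (Polynomial.degree_sum_le _ _).trans
    (Finset.sup_le fun k _ => degree_iter_deriv_le p k)

noncomputable def Eop (K : Type*) [Field K] (M : ℕ) :
    Polynomial.degreeLT K M →ₗ[K] Polynomial.degreeLT K M :=
  (sumIDeriv (R := K)).restrict (fun p hp =>
    Polynomial.mem_degreeLT.2 ((degree_sumIDeriv_le p).trans_lt (Polynomial.mem_degreeLT.1 hp)))

lemma Eop_apply (M : ℕ) (p : Polynomial.degreeLT K M) :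
    ((Eop K M p : Polynomial.degreeLT K M) : K[X]) = sumIDeriv (p : K[X]) := rfl

noncomputable def b0 (K : Type*) [Field K] (M : ℕ) : Module.Basis (Fin M) K (Polynomial.degreeLT K M) :=
  Module.Basis.ofEquivFun (Polynomial.degreeLTEquiv K M)

lemma b0_apply (M : ℕ) (j : Fin M) : ((b0 K M j : Polynomial.degreeLT K M) : K[X]) = X ^ (j : ℕ) := by
  simp only [b0, Module.Basis.coe_ofEquivFun, Polynomial.degreeLTEquiv, LinearEquiv.coe_symm_mk]
  rw [Finset.sum_eq_single j]
  · rw [Pi.single_eq_same, Polynomial.X_pow_eq_monomial]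
  · intro b _ hb
    rw [Pi.single_eq_of_ne hb, map_zero]
  · intro h
    exact absurd (Finset.mem_univ j) h

lemma det_Eop (M : ℕ) : LinearMap.det (Eop K M) = 1 := by
  rw [← LinearMap.det_toMatrix (b0 K M)]
  have hentry : ∀ i j : Fin M, LinearMap.toMatrix (b0 K M) (b0 K M) (Eop K M) i j
      = (sumIDeriv ((X : K[X]) ^ (j : ℕ))).coeff (i : ℕ) := by
    intro i j
    rw [LinearMap.toMatrix_apply]
    show Polynomial.degreeLTEquiv K M _ i = _
    show ((Eop K M (b0 K M j) : Polynomial.degreeLT K M) : K[X]).coeff (i : ℕ) = _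
    rw [Eop_apply, b0_apply]
  have htri : (LinearMap.toMatrix (b0 K M) (b0 K M) (Eop K M)).BlockTriangular id := by
    intro i j hij
    rw [hentry]
    refine Polynomial.coeff_eq_zero_of_degree_lt ?_
    refine lt_of_le_of_lt ((degree_sumIDeriv_le _).trans (Polynomial.degree_X_pow_le _)) ?_
    exact_mod_cast hij
  rw [Matrix.det_of_upperTriangular htri]
  refine Finset.prod_eq_one fun j _ => ?_
  rw [hentry, sumIDeriv_eq_self_add]
  rw [Polynomial.coeff_add, Polynomial.coeff_X_pow, if_pos rfl]
  have hz : (sumIDeriv (derivative ((X : K[X]) ^ (j : ℕ)))).coeff (j : ℕ) = 0 := by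
    refine Polynomial.coeff_eq_zero_of_degree_lt ?_
    refine lt_of_le_of_lt (degree_sumIDeriv_le _) ?_
    refine lt_of_lt_of_le (Polynomial.degree_derivative_lt (pow_ne_zero _ Polynomial.X_ne_zero)) ?_
    exact Polynomial.degree_X_pow_le _
  rw [← sumIDeriv_derivative, hz, add_zero]

def sigLO (n : Fin s → ℕ) : LinearOrder ((j : Fin s) × Fin (n j)) :=
  LinearOrder.lift' (fun x => toLex ((x.1 : ℕ), (x.2 : ℕ)))
    (by
      rintro ⟨a1, a2⟩ ⟨b1, b2⟩ h
      have h' : ((a1 : ℕ), (a2 : ℕ)) = ((b1 : ℕ), (b2 : ℕ)) := toLex.injective h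
      have h1 : (a1 : ℕ) = (b1 : ℕ) := congrArg Prod.fst h'
      have h2 : (a2 : ℕ) = (b2 : ℕ) := congrArg Prod.snd h'
      have hb : a1 = b1 := Fin.val_injective h1
      subst hb
      exact congrArg (Sigma.mk a1) (Fin.val_injective h2))

lemma sig_lt_iff (n : Fin s → ℕ) (a b : (j : Fin s) × Fin (n j)) :
    (sigLO n).lt a b ↔ ((a.1 : ℕ) < (b.1 : ℕ) ∨ (a.1 = b.1 ∧ (a.2 : ℕ) < (b.2 : ℕ))) := by
  show toLex ((a.1 : ℕ), (a.2 : ℕ)) < toLex ((b.1 : ℕ), (b.2 : ℕ)) ↔ _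
  rw [Prod.Lex.lt_iff]
  simp [Fin.val_inj]

noncomputable def Hm (α : Fin s → K) (n : Fin s → ℕ) :
    Matrix ((j : Fin s) × Fin (n j)) ((j : Fin s) × Fin (n j)) K :=
  Matrix.of fun ρ c =>
    Polynomial.eval (α c.1) (derivative^[n c.1 - 1 - (c.2 : ℕ)] (hp α n ρ.1 (ρ.2 : ℕ)))

noncomputable def Nm (α : Fin s → K) (n : Fin s → ℕ) :
    Matrix ((j : Fin s) × Fin (n j - 1)) ((j : Fin s) × Fin (n j - 1)) K :=
  Matrix.of fun ρ c =>
    Polynomial.eval (α c.1) (derivative^[n c.1 - 1 - ((c.2 : ℕ) + 1)] (hp α n ρ.1 ((ρ.2 : ℕ) + 1)))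

noncomputable def Gm (α : Fin s → K) (n : Fin s → ℕ) :
    Matrix ((j : Fin s) × Fin (n j)) ((j : Fin s) × Fin (n j)) K :=
  Matrix.of fun ρ c => ∑ u ∈ Finset.Ico (n c.1 - 1 - (c.2 : ℕ)) (∑ j, n j),
    Polynomial.eval (α c.1) (derivative^[u] (hp α n ρ.1 (ρ.2 : ℕ)))

noncomputable def Gm' (α : Fin s → K) (n : Fin s → ℕ) :
    Matrix ((j : Fin s) × Fin (n j)) ((j : Fin s) × Fin (n j)) K :=
  Matrix.of fun ρ c => if (c.2 : ℕ) = 0 then Gm α n ρ c else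
    Polynomial.eval (α c.1) (derivative^[n c.1 - 1 - (c.2 : ℕ)] (hp α n ρ.1 (ρ.2 : ℕ)))

noncomputable def Pm (n : Fin s → ℕ) :
    Matrix ((j : Fin s) × Fin (n j)) ((j : Fin s) × Fin (n j)) K :=
  Matrix.of fun σ c => if σ.1 = c.1 ∧ (σ.2 : ℕ) ≤ (c.2 : ℕ) then (1 : K) else 0

lemma det_Hm (α : Fin s → K) (n : Fin s → ℕ) (hn : ∀ i, 0 < n i) :
    (Hm α n).det = ∏ j, ∏ r : Fin (n j),
      (((n j - 1 - (r : ℕ)).factorial : K) * Polynomial.eval (α j) (Qp α n j)) := by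
  letI := sigLO n
  refine (Matrix.det_of_lowerTriangular (Hm α n) ?_).trans ?_
  · intro i j hij
    have hij' := (sig_lt_iff n i j).mp (by exact hij)
    obtain ⟨i1, i2⟩ := i
    obtain ⟨j1, j2⟩ := j
    show Polynomial.eval (α j1) (derivative^[n j1 - 1 - (j2 : ℕ)] (hp α n i1 (i2 : ℕ))) = 0
    rcases hij' with h | ⟨h, h2⟩
    · exact eval_hp_ne α n (fun he => absurd (congrArg Fin.val he) (by simp only [] at h; omega)) _
        (by have := hn j1; have := j2.isLt; omega)
    · simp only [] at h h2
      subst h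
      exact eval_hp_self_lt α n i1 i2 (by have := i2.isLt; have := j2.isLt; omega)
  · rw [← Finset.univ_sigma_univ, Finset.prod_sigma]
    exact Finset.prod_congr rfl fun j _ => Finset.prod_congr rfl fun r _ =>
      eval_hp_self_eq α n j (r : ℕ)

lemma det_Nm (α : Fin s → K) (n : Fin s → ℕ) (hn : ∀ i, 0 < n i) :
    (Nm α n).det = ∏ j, ∏ r : Fin (n j - 1),
      (((n j - 1 - ((r : ℕ) + 1)).factorial : K) * Polynomial.eval (α j) (Qp α n j)) := by
  letI := sigLO (fun j => n j - 1)
  refine (Matrix.det_of_lowerTriangular (Nm α n) ?_).trans ?_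
  · intro i j hij
    have hij' := (sig_lt_iff (fun j => n j - 1) i j).mp (by exact hij)
    obtain ⟨i1, i2⟩ := i
    obtain ⟨j1, j2⟩ := j
    show Polynomial.eval (α j1)
      (derivative^[n j1 - 1 - ((j2 : ℕ) + 1)] (hp α n i1 ((i2 : ℕ) + 1))) = 0
    rcases hij' with h | ⟨h, h2⟩
    · exact eval_hp_ne α n (fun he => absurd (congrArg Fin.val he) (by simp only [] at h; omega)) _
        (by have := hn j1; have := j2.isLt; omega)
    · simp only [] at h h2
      subst h
      exact eval_hp_self_lt α n i1 ((i2 : ℕ) + 1) (by have := i2.isLt; have := j2.isLt; omega)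
  · rw [← Finset.univ_sigma_univ, Finset.prod_sigma]
    exact Finset.prod_congr rfl fun j _ => Finset.prod_congr rfl fun r _ =>
      eval_hp_self_eq α n j ((r : ℕ) + 1)

lemma det_Pm (n : Fin s → ℕ) : (Pm (K := K) n).det = 1 := by
  letI := sigLO n
  refine (Matrix.det_of_upperTriangular (M := Pm (K := K) n) ?_).trans ?_
  · intro i j hij
    have hij' := (sig_lt_iff n j i).mp (by exact hij)
    obtain ⟨i1, i2⟩ := i
    obtain ⟨j1, j2⟩ := j
    rcases hij' with h | ⟨h, h2⟩
    · exact if_neg (by rintro ⟨he, -⟩; exact absurd (congrArg Fin.val he) (by omega))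
    · exact if_neg (by rintro ⟨-, hle⟩; dsimp only [] at h2 hle; omega)
  · rw [← Finset.univ_sigma_univ, Finset.prod_sigma]
    refine Finset.prod_eq_one fun j _ => Finset.prod_eq_one fun r _ => if_pos ⟨rfl, le_rfl⟩

lemma Gm_eq_mul (α : Fin s → K) (n : Fin s → ℕ) :
    Gm α n = Gm' α n * Pm n := by
  ext ρ c
  obtain ⟨k, t⟩ := c
  rw [Matrix.mul_apply, ← Finset.univ_sigma_univ, Finset.sum_sigma]
  symm
  rw [Finset.sum_eq_single k (fun b _ hb => Finset.sum_eq_zero fun u _ => by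
      simp [Pm, hb])
    (fun h => absurd (Finset.mem_univ k) h)]
  have hP : ∀ u : Fin (n k), Pm (K := K) n ⟨k, u⟩ ⟨k, t⟩ = if (u : ℕ) ≤ (t : ℕ) then 1 else 0 := by
    intro u
    show (if k = k ∧ (u : ℕ) ≤ (t : ℕ) then (1 : K) else 0) = _
    simp
  simp_rw [hP, mul_ite, mul_one, mul_zero]
  have hG' : ∀ u : Fin (n k), Gm' α n ρ ⟨k, u⟩ =
      if (u : ℕ) = 0 then ∑ d ∈ Finset.Ico (n k - 1) (∑ j, n j),
          Polynomial.eval (α k) (derivative^[d] (hp α n ρ.1 (ρ.2 : ℕ)))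
        else Polynomial.eval (α k) (derivative^[n k - 1 - (u : ℕ)] (hp α n ρ.1 (ρ.2 : ℕ))) := by
    intro u
    by_cases h0 : (u : ℕ) = 0
    · simp only [Gm', Gm, Matrix.of_apply, h0, if_pos, Nat.sub_zero, if_true]
    · simp only [Gm', Matrix.of_apply, h0, if_false]
  simp_rw [hG']
  rw [Fin.sum_univ_eq_sum_range (fun u => if u ≤ (t : ℕ) then
    (if u = 0 then ∑ d ∈ Finset.Ico (n k - 1) (∑ j, n j),
          Polynomial.eval (α k) (derivative^[d] (hp α n ρ.1 (ρ.2 : ℕ)))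
        else Polynomial.eval (α k) (derivative^[n k - 1 - u] (hp α n ρ.1 (ρ.2 : ℕ)))) else 0) (n k)]
  rw [← Finset.sum_filter]
  have hfil : (Finset.range (n k)).filter (· ≤ (t : ℕ)) = Finset.range ((t : ℕ) + 1) := by
    ext a
    simp only [Finset.mem_filter, Finset.mem_range]
    have := t.isLt
    omega
  rw [hfil, Finset.sum_range_succ']
  simp only [Nat.succ_ne_zero, if_false, if_pos rfl]
  have hre : ∑ i ∈ Finset.range (t : ℕ),
      Polynomial.eval (α k) (derivative^[n k - 1 - (i + 1)] (hp α n ρ.1 (ρ.2 : ℕ)))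
      = ∑ d ∈ Finset.Ico (n k - 1 - (t : ℕ)) (n k - 1),
          Polynomial.eval (α k) (derivative^[d] (hp α n ρ.1 (ρ.2 : ℕ))) := by
    refine Finset.sum_nbij' (i := fun i => n k - 1 - (i + 1)) (j := fun d => n k - 2 - d)
      ?_ ?_ ?_ ?_ ?_
    · intro a ha
      simp only [Finset.mem_range] at ha
      simp only [Finset.mem_Ico]
      have := t.isLt
      omega
    · intro d hd
      simp only [Finset.mem_Ico] at hd
      simp only [Finset.mem_range]
      have := t.isLt
      omega
    · intro a ha
      simp only [Finset.mem_range] at ha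
      show n k - 2 - (n k - 1 - (a + 1)) = a
      have := t.isLt
      omega
    · intro d hd
      simp only [Finset.mem_Ico] at hd
      show n k - 1 - (n k - 2 - d + 1) = d
      have := t.isLt
      omega
    · intro a _
      rfl
  rw [hre, if_pos trivial]
  rw [Finset.sum_Ico_consecutive _
    (by omega : n k - 1 - (t : ℕ) ≤ n k - 1)
    (by
      have hks : n k ≤ ∑ j, n j :=
        Finset.single_le_sum (fun i _ => Nat.zero_le _) (Finset.mem_univ k)
      omega : n k - 1 ≤ ∑ j, n j)]
  rfl

lemma det_Gm_eq_det_Hm [CharZero K] (α : Fin s → K) (n : Fin s → ℕ) (hn : ∀ i, 0 < n i)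
    (hs : 0 < s) (hHm : (Hm α n).det ≠ 0) :
    (Gm α n).det = (Hm α n).det := by
  set M := ∑ j, n j with hM
  haveI : Nonempty ((j : Fin s) × Fin (n j)) :=
    ⟨⟨⟨0, hs⟩, ⟨0, hn _⟩⟩⟩
  have hmem : ∀ ρ : (j : Fin s) × Fin (n j), hp α n ρ.1 (ρ.2 : ℕ) ∈ Polynomial.degreeLT K M :=
    fun ρ => Polynomial.mem_degreeLT.2 (lt_of_le_of_lt Polynomial.degree_le_natDegree
      (by exact_mod_cast (natDegree_hp_lt α n hn ρ.1 (ρ.2 : ℕ) : _)))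
  set hv : ((j : Fin s) × Fin (n j)) → Polynomial.degreeLT K M :=
    fun ρ => ⟨hp α n ρ.1 (ρ.2 : ℕ), hmem ρ⟩ with hhv
  set Φm : Polynomial.degreeLT K M →ₗ[K] (((j : Fin s) × Fin (n j)) → K) :=
    LinearMap.pi (fun c => (Polynomial.leval (α c.1)) ∘ₗ
      ((Polynomial.derivative : K[X] →ₗ[K] K[X]) ^ (n c.1 - 1 - (c.2 : ℕ))) ∘ₗ
      (Polynomial.degreeLT K M).subtype) with hΦm
  have hΦ_apply : ∀ (p : Polynomial.degreeLT K M) c,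
      Φm p c = Polynomial.eval (α c.1) (derivative^[n c.1 - 1 - (c.2 : ℕ)] (p : K[X])) := by
    intro p c
    simp only [hΦm, LinearMap.pi_apply, LinearMap.coe_comp, Function.comp_apply,
      Submodule.coe_subtype, Module.End.pow_apply, Polynomial.leval_apply]
  have hΦhv : ∀ ρ, Φm (hv ρ) = Hm α n ρ := by
    intro ρ
    funext c
    rw [hΦ_apply]
    rfl
  have hLI : LinearIndependent K hv := by
    refine LinearIndependent.of_comp Φm ?_
    have : (⇑Φm ∘ hv) = fun ρ => Hm α n ρ := funext hΦhv
    rw [this]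
    exact Matrix.linearIndependent_rows_iff_isUnit.2
      ((Matrix.isUnit_iff_isUnit_det _).2 (isUnit_iff_ne_zero.2 hHm))
  haveI : FiniteDimensional K (Polynomial.degreeLT K M) :=
    Module.Finite.of_basis (Module.Basis.ofEquivFun (Polynomial.degreeLTEquiv K M))
  have hcard : Fintype.card ((j : Fin s) × Fin (n j)) = Module.finrank K (Polynomial.degreeLT K M) := by
    rw [(Polynomial.degreeLTEquiv K M).finrank_eq]
    simp [Fintype.card_sigma, hM]
  let bh : Module.Basis ((j : Fin s) × Fin (n j)) K (Polynomial.degreeLT K M) :=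
    basisOfLinearIndependentOfCardEqFinrank hLI hcard
  have hbh : ⇑bh = hv := coe_basisOfLinearIndependentOfCardEqFinrank hLI hcard
  set Emat := LinearMap.toMatrix bh bh (Eop K M) with hEmat
  have hdetE : Emat.det = 1 := by rw [hEmat, LinearMap.det_toMatrix]; exact det_Eop M
  have hfact : Gm α n = Emat.transpose * Hm α n := by
    ext ρ c
    rw [Matrix.mul_apply]
    have h1 : Gm α n ρ c = Φm ((Eop K M) (hv ρ)) c := by
      rw [hΦ_apply, Eop_apply]
      show (∑ u ∈ Finset.Ico (n c.1 - 1 - (c.2 : ℕ)) M,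
        Polynomial.eval (α c.1) (derivative^[u] (hp α n ρ.1 (ρ.2 : ℕ)))) = _
      rw [sumIDeriv_apply_of_lt (natDegree_hp_lt α n hn ρ.1 (ρ.2 : ℕ))]
      set d := n c.1 - 1 - (c.2 : ℕ) with hd
      have hrw : derivative^[d] (∑ i ∈ Finset.range M, derivative^[i] (hp α n ρ.1 (ρ.2 : ℕ)))
          = ∑ i ∈ Finset.range M, derivative^[d + i] (hp α n ρ.1 (ρ.2 : ℕ)) := by
        rw [show (derivative^[d] : K[X] → K[X]) = ⇑((Polynomial.derivative : K[X] →ₗ[K] K[X]) ^ d)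
          from (funext fun q => (Module.End.pow_apply _ _ _).symm)]
        rw [map_sum]
        exact Finset.sum_congr rfl fun i _ => by
          rw [Module.End.pow_apply, ← Function.iterate_add_apply]
      rw [hrw, Polynomial.eval_finset_sum]
      have hdM : d ≤ M := by
        have h1 : n c.1 ≤ M :=
          Finset.single_le_sum (fun i _ => Nat.zero_le _) (Finset.mem_univ c.1)
        omega
      have hre : ∑ i ∈ Finset.range M,
          Polynomial.eval (α c.1) (derivative^[d + i] (hp α n ρ.1 (ρ.2 : ℕ)))
          = ∑ u ∈ Finset.Ico d (d + M),
              Polynomial.eval (α c.1) (derivative^[u] (hp α n ρ.1 (ρ.2 : ℕ))) := by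
        rw [Finset.sum_Ico_eq_sum_range]
        simp only [Nat.add_sub_cancel_left]
      rw [hre, ← Finset.sum_Ico_consecutive _ hdM (Nat.le_add_left M d)]
      have hzero : ∑ u ∈ Finset.Ico M (d + M),
          Polynomial.eval (α c.1) (derivative^[u] (hp α n ρ.1 (ρ.2 : ℕ))) = 0 := by
        refine Finset.sum_eq_zero fun u hu => ?_
        rw [Polynomial.iterate_derivative_eq_zero
          (lt_of_lt_of_le (natDegree_hp_lt α n hn ρ.1 (ρ.2 : ℕ)) (Finset.mem_Ico.1 hu).1),
          Polynomial.eval_zero]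
      rw [hzero, add_zero]
    rw [h1, ← hbh]
    conv_lhs => rw [← Module.Basis.sum_repr bh ((Eop K M) (bh ρ))]
    rw [map_sum]
    rw [Finset.sum_apply]
    refine Finset.sum_congr rfl fun σ _ => ?_
    rw [map_smul, Pi.smul_apply, smul_eq_mul, Matrix.transpose_apply]
    congr 1
    · rw [hEmat, LinearMap.toMatrix_apply]
    · rw [hbh]; exact congrFun (hΦhv σ) c
  rw [hfact, Matrix.det_mul, Matrix.det_transpose, hdetE, one_mul]

def blk (n : Fin s → ℕ) (hn : ∀ i, 0 < n i) :
    (Fin s ⊕ ((j : Fin s) × Fin (n j - 1))) ≃ ((j : Fin s) × Fin (n j)) where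
  toFun x := match x with
    | .inl j => ⟨j, ⟨0, hn j⟩⟩
    | .inr ⟨j, r⟩ => ⟨j, ⟨(r : ℕ) + 1, by have := r.isLt; omega⟩⟩
  invFun c := if h : (c.2 : ℕ) = 0 then .inl c.1
    else .inr ⟨c.1, ⟨(c.2 : ℕ) - 1, by have := c.2.isLt; omega⟩⟩
  left_inv := by
    rintro (j | ⟨j, r⟩)
    · rfl
    · dsimp only
      rw [dif_neg (Nat.succ_ne_zero _)]
      exact congrArg Sum.inr (congrArg (Sigma.mk j) (Fin.ext (Nat.succ_sub_one _)))
  right_inv := by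
    rintro ⟨j, t⟩
    dsimp only
    by_cases h : (t : ℕ) = 0
    · rw [dif_pos h]
      exact congrArg (Sigma.mk j) (Fin.ext h.symm)
    · rw [dif_neg h]
      exact congrArg (Sigma.mk j) (Fin.ext (by
        show (t : ℕ) - 1 + 1 = (t : ℕ)
        omega))

lemma aH_eq_Gm' (α : Fin s → K) (n : Fin s → ℕ) (hn : ∀ i, 0 < n i) (j k : Fin s) :
    aH α (fun k => n k - if k = j then 1 else 0) k = Gm' α n ⟨j, ⟨0, hn j⟩⟩ ⟨k, ⟨0, hn k⟩⟩ := by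
  have h1 : Gm' α n ⟨j, ⟨0, hn j⟩⟩ ⟨k, ⟨0, hn k⟩⟩ =
      ∑ u ∈ Finset.Ico (n k - 1) (∑ i, n i),
        Polynomial.eval (α k) (derivative^[u] (hp α n j 0)) := by
    simp only [Gm', Gm, Matrix.of_apply]
    norm_num
  show (Ppoly α _).eval (α k) = _
  rw [h1, Ppoly, Polynomial.eval_finset_sum]
  have h2 : fpoly α (fun k => n k - if k = j then 1 else 0) = hp α n j 0 := fpoly_eq_hp α n j
  rw [sum_sub_ite n hn j]
  simp_rw [h2]
  rw [Finset.range_eq_Ico, ← Finset.sum_Ico_consecutive _ (Nat.zero_le (n k - 1))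
    (by
      have : n k ≤ ∑ i, n i :=
        Finset.single_le_sum (fun i _ => Nat.zero_le _) (Finset.mem_univ k)
      omega : n k - 1 ≤ ∑ i, n i)]
  have h3 : ∑ u ∈ Finset.Ico 0 (n k - 1),
      Polynomial.eval (α k) (derivative^[u] (hp α n j 0)) = 0 := by
    refine Finset.sum_eq_zero fun u hu => ?_
    rw [Finset.mem_Ico] at hu
    by_cases hkj : k = j
    · subst hkj
      exact eval_hp_self_lt α n k 0 (by omega)
    · exact eval_hp_ne α n hkj 0 (by have := hn k; omega)
  rw [h3, zero_add]

lemma Gm'_row0_zero (α : Fin s → K) (n : Fin s → ℕ) (hn : ∀ i, 0 < n i) (j k : Fin s)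
    (t : Fin (n k - 1)) :
    Gm' α n ⟨j, ⟨0, hn j⟩⟩ ⟨k, ⟨(t : ℕ) + 1, by have := t.isLt; omega⟩⟩ = 0 := by
  have h1 : Gm' α n ⟨j, ⟨0, hn j⟩⟩ ⟨k, ⟨(t : ℕ) + 1, by have := t.isLt; omega⟩⟩ =
      Polynomial.eval (α k) (derivative^[n k - 1 - ((t : ℕ) + 1)] (hp α n j 0)) := by
    simp only [Gm', Matrix.of_apply]
    norm_num
  rw [h1]
  by_cases hkj : k = j
  · subst hkj
    exact eval_hp_self_lt α n k 0 (by have := t.isLt; omega)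
  · exact eval_hp_ne α n hkj 0 (by have := hn k; have := t.isLt; omega)

lemma det_Gm'_eq (α : Fin s → K) (n : Fin s → ℕ) (hn : ∀ i, 0 < n i) :
    (Gm' α n).det =
      (Matrix.det (Matrix.of fun i j =>
        aH α (fun k => n k - if k = i then 1 else 0) j)) * (Nm α n).det := by
  rw [← Matrix.det_submatrix_equiv_self (blk n hn) (Gm' α n)]
  have hsub : (Gm' α n).submatrix (blk n hn) (blk n hn) =
      Matrix.fromBlocks (Matrix.of fun i j => aH α (fun k => n k - if k = i then 1 else 0) j)
        0
        (Matrix.of fun (ρ : (j : Fin s) × Fin (n j - 1)) (k : Fin s) =>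
          Gm' α n ⟨ρ.1, ⟨(ρ.2 : ℕ) + 1, by have := ρ.2.isLt; omega⟩⟩ ⟨k, ⟨0, hn k⟩⟩)
        (Nm α n) := by
    ext x y
    rcases x with j | ⟨j, r⟩ <;> rcases y with k | ⟨k, t⟩
    · exact (aH_eq_Gm' α n hn j k).symm
    · exact Gm'_row0_zero α n hn j k t
    · rfl
    · show Gm' α n ⟨j, ⟨(r : ℕ) + 1, _⟩⟩ ⟨k, ⟨(t : ℕ) + 1, _⟩⟩ = Nm α n ⟨j, r⟩ ⟨k, t⟩
      simp only [Gm', Nm, Matrix.of_apply]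
      norm_num
  rw [hsub, Matrix.det_fromBlocks_zero₁₂]

end MahlerAux

open MahlerAux in
/-- **Mahler.** For `n` with all coordinates positive, the determinant of
the matrix whose `i`-th row is `a_{n−eᵢ}` equals
`∏ᵢ (nᵢ−1)! ∏_{k≠i} (αᵢ−α_k)^{n_k}`, and in particular it is nonzero. -/
theorem stmt2 {K : Type*} [Field K] [CharZero K] {s : ℕ} (α : Fin s → K)
    (hα : Function.Injective α) (n : Fin s → ℕ) (hn : ∀ i, 0 < n i) :
    Matrix.det (Matrix.of fun i j =>
        aH α (fun k => n k - if k = i then 1 else 0) j) =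
      ∏ i, (((n i - 1).factorial : K) *
        ∏ k ∈ Finset.univ.erase i, (α i - α k) ^ n k) ∧
    Matrix.det (Matrix.of fun i j =>
        aH α (fun k => n k - if k = i then 1 else 0) j) ≠ 0 := by
  have hπ : ∀ j, (∏ k ∈ Finset.univ.erase j, (α j - α k) ^ n k) ≠ 0 := fun j =>
    Finset.prod_ne_zero_iff.2 fun k hk =>
      pow_ne_zero _ (sub_ne_zero_of_ne fun he => (Finset.mem_erase.1 hk).1 (hα he).symm)
  have hfac : ∀ m : ℕ, ((m.factorial : K)) ≠ 0 := fun m =>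
    Nat.cast_ne_zero.2 (Nat.factorial_ne_zero m)
  have hprod_ne : (∏ i, (((n i - 1).factorial : K) *
      ∏ k ∈ Finset.univ.erase i, (α i - α k) ^ n k)) ≠ 0 :=
    Finset.prod_ne_zero_iff.2 fun i _ => mul_ne_zero (hfac _) (hπ i)
  rcases Nat.eq_zero_or_pos s with hs | hs
  · subst hs
    constructor
    · rw [Matrix.det_isEmpty, Finset.univ_eq_empty, Finset.prod_empty]
    · rw [Matrix.det_isEmpty]; exact one_ne_zero
  -- main case
  have hHm_ne : (Hm α n).det ≠ 0 := by
    rw [det_Hm α n hn]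
    refine Finset.prod_ne_zero_iff.2 fun j _ => Finset.prod_ne_zero_iff.2 fun r _ => ?_
    rw [eval_Qp]
    exact mul_ne_zero (hfac _) (hπ j)
  have hNm_ne : (Nm α n).det ≠ 0 := by
    rw [det_Nm α n hn]
    refine Finset.prod_ne_zero_iff.2 fun j _ => Finset.prod_ne_zero_iff.2 fun r _ => ?_
    rw [eval_Qp]
    exact mul_ne_zero (hfac _) (hπ j)
  have hsplit : ∀ j : Fin s, (∏ r : Fin (n j),
      (((n j - 1 - (r : ℕ)).factorial : K) * Polynomial.eval (α j) (Qp α n j)))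
      = (((n j - 1).factorial : K) * ∏ k ∈ Finset.univ.erase j, (α j - α k) ^ n k) *
        ∏ r : Fin (n j - 1),
          (((n j - 1 - ((r : ℕ) + 1)).factorial : K) * Polynomial.eval (α j) (Qp α n j)) := by
    intro j
    rw [Fin.prod_univ_eq_prod_range
      (fun r => ((n j - 1 - r).factorial : K) * Polynomial.eval (α j) (Qp α n j)) (n j)]
    rw [Fin.prod_univ_eq_prod_range
      (fun r => ((n j - 1 - (r + 1)).factorial : K) * Polynomial.eval (α j) (Qp α n j)) (n j - 1)]
    rw [Finset.prod_range_reflect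
      (fun d => ((d.factorial : K)) * Polynomial.eval (α j) (Qp α n j)) (n j)]
    have hcongr : ∏ r ∈ Finset.range (n j - 1),
        (((n j - 1 - (r + 1)).factorial : K) * Polynomial.eval (α j) (Qp α n j))
        = ∏ r ∈ Finset.range (n j - 1),
          (((n j - 1 - 1 - r).factorial : K) * Polynomial.eval (α j) (Qp α n j)) :=
      Finset.prod_congr rfl fun r _ => by rw [show n j - 1 - (r + 1) = n j - 1 - 1 - r from by omega]
    rw [hcongr, Finset.prod_range_reflect
      (fun d => ((d.factorial : K)) * Polynomial.eval (α j) (Qp α n j)) (n j - 1)]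
    have hnj : n j = (n j - 1) + 1 := (Nat.succ_pred_eq_of_pos (hn j)).symm
    rw [hnj, Finset.prod_range_succ]
    rw [eval_Qp]
    have : n j - 1 + 1 - 1 = n j - 1 := by omega
    rw [this, mul_comm]
  have key : (Matrix.det (Matrix.of fun i j =>
      aH α (fun k => n k - if k = i then 1 else 0) j)) * (Nm α n).det
      = (∏ i, (((n i - 1).factorial : K) *
          ∏ k ∈ Finset.univ.erase i, (α i - α k) ^ n k)) * (Nm α n).det := by
    rw [← det_Gm'_eq α n hn]
    have h1 : (Gm' α n).det = (Gm α n).det := by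
      rw [Gm_eq_mul α n, Matrix.det_mul, det_Pm n, mul_one]
    rw [h1, det_Gm_eq_det_Hm α n hn hs hHm_ne, det_Hm α n hn, det_Nm α n hn]
    rw [← Finset.prod_mul_distrib]
    exact Finset.prod_congr rfl fun j _ => hsplit j
  have hmain := mul_right_cancel₀ hNm_ne key
  exact ⟨hmain, hmain ▸ hprod_ne⟩
end

section
/- Let F be a field, let α₁, …, α_s ∈ F be distinct, let n₁, …, n_s ≥ 1 be integers with sum N, and set f(z) = ∏_{i=1}^s (z − α_i)^{n_i}. Suppose the derivative factors as f′(z) = N·∏_{i=1}^s (z − α_i)^{n_i − 1} · ∏_{j=1}^p (z − β_j)^{m_j}, where β₁, …, β_p ∈ F are distinct elements, none equal to any α_i, and m₁, …, m_p ≥ 1 (so m₁ + ⋯ + m_p = s − 1). Then N^N · ∏_{j=1}^p f(β_j)^{m_j} = ∏_{i=1}^s ( n_i^{n_i} · ∏_{k≠i} (α_i − α_k)^{n_k} ). -/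
open Polynomial

private lemma polyDerivativeFinsetProd {R ι : Type*} [CommRing R] [DecidableEq ι]
    (s : Finset ι) (f : ι → Polynomial R) :
    Polynomial.derivative (∏ i ∈ s, f i)
      = ∑ i ∈ s, (∏ k ∈ s.erase i, f k) * Polynomial.derivative (f i) := by
  induction s using Finset.induction_on with
  | empty => simp
  | @insert a s ha ih =>
    rw [Finset.prod_insert ha, Polynomial.derivative_mul, Finset.sum_insert ha,
      Finset.erase_insert ha, ih, Finset.mul_sum]
    congr 1
    · exact mul_comm _ _
    refine Finset.sum_congr rfl fun i hi => ?_
    rw [Finset.erase_insert_of_ne (Ne.symm (fun h : i = a => ha (h ▸ hi))),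
      Finset.prod_insert (fun h => ha (Finset.mem_of_mem_erase h))]
    ring

/-- **semi-resultant.** Let `F` be a field, `α₁,…,α_s ∈ F` distinct,
`n₁,…,n_s ≥ 1` with sum `N`, `f = ∏ (X−αᵢ)^{nᵢ}`.  If
`f′ = N ∏ (X−αᵢ)^{nᵢ−1} ∏ (X−βⱼ)^{mⱼ}` with `β₁,…,β_p` distinct, none equal to
any `αᵢ`, and `mⱼ ≥ 1`, then
`N^N ∏ⱼ f(βⱼ)^{mⱼ} = ∏ᵢ nᵢ^{nᵢ} ∏_{k≠i} (αᵢ−α_k)^{n_k}`. -/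
theorem stmt6 {F : Type*} [Field F] {s p : ℕ}
    (α : Fin s → F) (hα : Function.Injective α)
    (n : Fin s → ℕ) (hn : ∀ i, 1 ≤ n i) (N : ℕ) (hN : N = ∑ i, n i)
    (f : F[X]) (hf : f = ∏ i, (X - C (α i)) ^ n i)
    (β : Fin p → F) (hβ : Function.Injective β)
    (hβα : ∀ j i, β j ≠ α i)
    (m : Fin p → ℕ) (hm : ∀ j, 1 ≤ m j)
    (hder : derivative f =
      C (N : F) * (∏ i, (X - C (α i)) ^ (n i - 1)) * ∏ j, (X - C (β j)) ^ m j) :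
    (N : F) ^ N * ∏ j, f.eval (β j) ^ m j =
      ∏ i, ((n i : F) ^ n i * ∏ k ∈ Finset.univ.erase i, (α i - α k) ^ n k) := by
  classical
  set P : F[X] := ∏ i, (X - C (α i)) ^ (n i - 1) with hP
  set Q : F[X] := ∏ j, (X - C (β j)) ^ m j with hQ
  set g : F[X] := ∑ i, C (n i : F) * ∏ k ∈ Finset.univ.erase i, (X - C (α k)) with hg
  have hPne : P ≠ 0 := by
    rw [hP]
    exact Finset.prod_ne_zero_iff.mpr fun i _ => pow_ne_zero _ (X_sub_C_ne_zero _)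
  -- step 1 : derivative f = P * g
  have hpow : ∀ k : Fin s, (X - C (α k)) ^ n k
      = (X - C (α k)) ^ (n k - 1) * (X - C (α k)) := by
    intro k
    conv_lhs => rw [← Nat.sub_add_cancel (hn k)]
    rw [pow_succ]
  have hderf : derivative f = P * g := by
    rw [hf, polyDerivativeFinsetProd, hg, Finset.mul_sum]
    refine Finset.sum_congr rfl fun i _ => ?_
    rw [derivative_X_sub_C_pow]
    have h1 : ∏ k ∈ Finset.univ.erase i, (X - C (α k)) ^ n k
        = (∏ k ∈ Finset.univ.erase i, (X - C (α k)) ^ (n k - 1)) *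
          ∏ k ∈ Finset.univ.erase i, (X - C (α k)) := by
      rw [← Finset.prod_mul_distrib]
      exact Finset.prod_congr rfl fun k _ => hpow k
    have h2 : P = (X - C (α i)) ^ (n i - 1) *
        ∏ k ∈ Finset.univ.erase i, (X - C (α k)) ^ (n k - 1) := by
      rw [hP, ← Finset.mul_prod_erase _ _ (Finset.mem_univ i)]
    rw [h1, h2]
    ring
  -- step 2 : g = C N * Q
  have key : g = C (N : F) * Q := by
    apply mul_left_cancel₀ hPne
    rw [← hderf, hder]
    ring
  -- evaluation of g at α i
  have hgα : ∀ i, g.eval (α i)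
      = (n i : F) * ∏ k ∈ Finset.univ.erase i, (α i - α k) := by
    intro i
    rw [hg, eval_finset_sum]
    rw [Finset.sum_eq_single i]
    · simp [eval_prod]
    · intro b _ hbi
      have hib : i ∈ Finset.univ.erase b := Finset.mem_erase.mpr ⟨fun h => hbi h.symm, Finset.mem_univ i⟩
      rw [eval_mul, eval_prod]
      rw [Finset.prod_eq_zero hib (by simp)]
      ring
    · simp
  have hQα : ∀ i, Q.eval (α i) = ∏ j, (α i - β j) ^ m j := by
    intro i; rw [hQ]; simp [eval_prod]
  have hkeyev : ∀ i, (n i : F) * ∏ k ∈ Finset.univ.erase i, (α i - α k)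
      = (N : F) * ∏ j, (α i - β j) ^ m j := by
    intro i
    rw [← hgα i, key, eval_mul, eval_C, hQα]
  have hαne : ∀ i, (∏ k ∈ Finset.univ.erase i, (α i - α k)) ≠ 0 := by
    intro i
    refine Finset.prod_ne_zero_iff.mpr fun k hk => sub_ne_zero.mpr fun h => ?_
    exact (Finset.mem_erase.mp hk).1.symm (hα h)
  by_cases hNF : (N : F) = 0
  · -- degenerate case : char divides N
    rcases Nat.eq_zero_or_pos s with hs | hs
    · subst hs
      have hN0 : N = 0 := by simp [hN]
      subst hN0
      simp [hf]
    · obtain ⟨i⟩ : Nonempty (Fin s) := ⟨⟨0, hs⟩⟩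
      have hg0 : g = 0 := by
        apply mul_left_cancel₀ hPne
        rw [← hderf, hder, hNF]
        simp
      have hni : (n i : F) = 0 := by
        have := hgα i
        rw [hg0] at this
        simp at this
        rcases this with h | h
        · exact h
        · exact absurd h (hαne i)
      have hN1 : N ≠ 0 := by
        have h1 : 1 ≤ n i := hn i
        have hle : n i ≤ N := hN ▸ Finset.single_le_sum (fun j _ => Nat.zero_le _)
          (Finset.mem_univ i)
        omega
      rw [hNF, zero_pow hN1, zero_mul]
      symm
      apply Finset.prod_eq_zero (Finset.mem_univ i)
      rw [hni, zero_pow (by have := hn i; omega), zero_mul]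
  · -- main case
    have hnine : ∀ i, (n i : F) ≠ 0 := by
      intro i hni
      apply hNF
      have h := hkeyev i
      rw [hni, zero_mul] at h
      have hne : (∏ j, (α i - β j) ^ m j) ≠ 0 :=
        Finset.prod_ne_zero_iff.mpr fun j _ =>
          pow_ne_zero _ (sub_ne_zero.mpr fun h => (hβα j i) h.symm)
      exact (mul_eq_zero.mp h.symm).resolve_right hne
    -- degree computation : ∑ m j = s - 1
    have hs : 0 < s := by
      rcases Nat.eq_zero_or_pos s with h | h
      · exfalso; apply hNF; subst h; simp [hN]
      · exact h
    have hdegQ : Q.natDegree = ∑ j, m j := by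
      rw [hQ, natDegree_prod]
      · exact Finset.sum_congr rfl fun j _ => by
          rw [natDegree_pow, natDegree_X_sub_C, mul_one]
      · exact fun j _ => pow_ne_zero _ (X_sub_C_ne_zero _)
    have hmon : ∀ i : Fin s, (∏ k ∈ Finset.univ.erase i, (X - C (α k))).Monic :=
      fun i => monic_prod_of_monic _ _ fun k _ => monic_X_sub_C _
    have hdegM : ∀ i : Fin s, (∏ k ∈ Finset.univ.erase i, (X - C (α k))).natDegree = s - 1 := by
      intro i
      rw [natDegree_prod _ _ fun k _ => X_sub_C_ne_zero _]
      simp [Finset.card_erase_of_mem]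
    have hcoeff : g.coeff (s - 1) = (N : F) := by
      rw [hg, finset_sum_coeff, hN]
      push_cast
      refine Finset.sum_congr rfl fun i _ => ?_
      rw [coeff_C_mul, ← hdegM i, (hmon i).coeff_natDegree, mul_one]
    have hdegg : g.natDegree ≤ s - 1 := by
      apply natDegree_sum_le_of_forall_le
      intro i _
      calc (C (n i : F) * ∏ k ∈ Finset.univ.erase i, (X - C (α k))).natDegree
          ≤ (C (n i : F)).natDegree + (∏ k ∈ Finset.univ.erase i, (X - C (α k))).natDegree :=
            natDegree_mul_le
        _ = s - 1 := by rw [natDegree_C, hdegM i, zero_add]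
    have hsum : ∑ j, m j = s - 1 := by
      have h1 : s - 1 ≤ g.natDegree := le_natDegree_of_ne_zero (hcoeff ▸ hNF)
      have h2 : g.natDegree = ∑ j, m j := by
        rw [key, natDegree_C_mul hNF, hdegQ]
      omega
    -- evaluations of f at β j
    have hfβ : ∀ j, f.eval (β j) = ∏ i, (β j - α i) ^ n i := by
      intro j; rw [hf]; simp [eval_prod]
    -- the two sides
    have cardE : ∀ i : Fin s, (Finset.univ.erase i).card = s - 1 := by
      intro i; simp [Finset.card_erase_of_mem]
    have hRHSi : ∀ i : Fin s,
        (n i : F) ^ n i * ∏ k ∈ Finset.univ.erase i, (α k - α i) ^ n i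
          = (-1 : F) ^ ((s - 1) * n i) * ((N : F) * ∏ j, (α i - β j) ^ m j) ^ n i := by
      intro i
      have h1 : ∏ k ∈ Finset.univ.erase i, (α k - α i)
          = (-1 : F) ^ (s - 1) * ∏ k ∈ Finset.univ.erase i, (α i - α k) := by
        rw [← cardE i, ← Finset.prod_const (-1 : F), ← Finset.prod_mul_distrib]
        exact Finset.prod_congr rfl fun k _ => by ring
      rw [Finset.prod_pow, h1, mul_pow, ← pow_mul, ← hkeyev i]
      ring
    -- LHS per-j expansion
    have hLHSj : ∀ j : Fin p, f.eval (β j) ^ m j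
        = (-1 : F) ^ (N * m j) * ∏ i, (α i - β j) ^ (n i * m j) := by
      intro j
      rw [hfβ j]
      have h1 : ∏ i, (β j - α i) ^ n i
          = (-1 : F) ^ N * ∏ i, (α i - β j) ^ n i := by
        rw [Finset.prod_congr rfl fun i _ => by
          rw [show β j - α i = -(α i - β j) by ring, neg_pow],
          Finset.prod_mul_distrib, Finset.prod_pow_eq_pow_sum, ← hN]
      rw [h1, mul_pow, ← pow_mul, ← Finset.prod_pow]
      congr 1
      exact Finset.prod_congr rfl fun i _ => by rw [← pow_mul]
    have e1 : (N : F) ^ N * ∏ j, f.eval (β j) ^ m j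
        = ((-1 : F) ^ N) ^ (s - 1) *
            ((N : F) ^ N * ∏ j, ∏ i, (α i - β j) ^ (n i * m j)) := by
      rw [Finset.prod_congr rfl fun j _ => hLHSj j, Finset.prod_mul_distrib]
      rw [Finset.prod_congr rfl fun j (_ : j ∈ Finset.univ) =>
        (pow_mul (-1 : F) N (m j) : (-1 : F) ^ (N * m j) = _),
        Finset.prod_pow_eq_pow_sum, hsum]
      ring
    -- RHS expansion
    have hswap : ∏ i, ∏ k ∈ Finset.univ.erase i, (α i - α k) ^ n k
        = ∏ k, ∏ i ∈ Finset.univ.erase k, (α i - α k) ^ n k := by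
      apply Finset.prod_comm'
      intro i k
      simp only [Finset.mem_univ, Finset.mem_erase, true_and, and_true]
      exact ⟨fun h => h.symm, fun h => h.symm⟩
    have e2 : (∏ i, ((n i : F) ^ n i * ∏ k ∈ Finset.univ.erase i, (α i - α k) ^ n k))
        = ((-1 : F) ^ (s - 1)) ^ N *
            ((N : F) ^ N * ∏ i, ∏ j, (α i - β j) ^ (n i * m j)) := by
      rw [Finset.prod_mul_distrib, hswap, ← Finset.prod_mul_distrib]
      rw [Finset.prod_congr rfl fun k (_ : k ∈ Finset.univ) => hRHSi k]
      rw [Finset.prod_mul_distrib]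
      rw [Finset.prod_congr rfl fun i (_ : i ∈ Finset.univ) =>
        (pow_mul (-1 : F) (s - 1) (n i) : (-1 : F) ^ ((s - 1) * n i) = _),
        Finset.prod_pow_eq_pow_sum, ← hN]
      congr 1
      rw [Finset.prod_congr rfl fun i (_ : i ∈ Finset.univ) =>
        (mul_pow (N : F) _ (n i)),
        Finset.prod_mul_distrib, Finset.prod_pow_eq_pow_sum, ← hN]
      congr 1
      refine Finset.prod_congr rfl fun i _ => ?_
      rw [← Finset.prod_pow]
      exact Finset.prod_congr rfl fun j _ => by rw [← pow_mul, Nat.mul_comm]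
    rw [e1, e2, Finset.prod_comm, pow_right_comm]
end

section
/- Let α₁, …, α_s ∈ ℂ be distinct, let n₁, …, n_s ≥ 1 be integers with sum N, set f(z) = ∏_{i=1}^s (z − α_i)^{n_i}, and suppose f′(z) = N·∏_{i=1}^s (z − α_i)^{n_i − 1} · ∏_{j=1}^p (z − β_j)^{m_j} with β₁, …, β_p ∈ ℂ distinct, none equal to any α_i, and m₁, …, m_p ≥ 1. Then N! · ∏_{j=1}^p |f(β_j)|^{m_j} ≤ ∏_{i=1}^s ( n_i! · ∏_{k≠i} |α_i − α_k|^{n_k} ). -/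
open Polynomial

open Finset in
private lemma stmt7_combC {s : ℕ} (n : Fin s → ℕ) :
    (∑ i, n i).factorial * ∏ i, (n i) ^ (n i) ≤
      (∑ i, n i) ^ (∑ i, n i) * ∏ i, (n i).factorial := by
  have hmem : n ∈ Finset.piAntidiag (univ : Finset (Fin s)) (∑ i, n i) := by
    rw [Finset.mem_piAntidiag]; exact ⟨rfl, fun i _ => Finset.mem_univ i⟩
  have hkey : Nat.multinomial univ n * ∏ i, (n i) ^ (n i) ≤ (∑ i, n i) ^ (∑ i, n i) := by
    rw [Finset.sum_pow_eq_sum_piAntidiag univ n (∑ i, n i)]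
    calc Nat.multinomial univ n * ∏ i, (n i) ^ (n i)
        = (fun k => (Nat.multinomial univ k : ℕ) * ∏ i, (n i) ^ (k i)) n := by push_cast; ring
      _ ≤ _ := Finset.single_le_sum (f := fun k => (Nat.multinomial univ k : ℕ) * ∏ i, (n i) ^ (k i)) (fun k _ => Nat.zero_le _) hmem
  calc (∑ i, n i).factorial * ∏ i, (n i) ^ (n i)
      = (∏ i, (n i).factorial) * (Nat.multinomial univ n * ∏ i, (n i) ^ (n i)) := by
        rw [← Nat.multinomial_spec]; ring
    _ ≤ (∏ i, (n i).factorial) * ((∑ i, n i) ^ (∑ i, n i)) :=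
        Nat.mul_le_mul_left _ hkey
    _ = (∑ i, n i) ^ (∑ i, n i) * ∏ i, (n i).factorial := Nat.mul_comm _ _

open Finset in
private lemma stmt7_swapC {s : ℕ} (d : Fin s → Fin s → ℝ) (hd : ∀ i k, d i k = d k i)
    (n : Fin s → ℕ) :
    ∏ i, ∏ k ∈ univ.erase i, d i k ^ n i = ∏ i, ∏ k ∈ univ.erase i, d i k ^ n k := by
  rw [Finset.prod_comm' (s' := fun y => univ.erase y) (t' := univ)
    (by intro x y; simp [eq_comm, Ne, and_comm])]
  refine Finset.prod_congr rfl fun i _ => Finset.prod_congr rfl fun k hk => by rw [hd]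

open Finset in
private lemma stmt7_lemB {s p : ℕ} (α : Fin s → ℂ) (n : Fin s → ℕ) (β : Fin p → ℂ)
    (m : Fin p → ℕ) (f : ℂ[X]) (hf : f = ∏ i, (X - C (α i)) ^ n i) :
    ∏ j, ‖f.eval (β j)‖ ^ m j
      = ∏ i, ‖(∏ j, (X - C (β j)) ^ m j).eval (α i)‖ ^ n i := by
  have hfb : ∀ j, ‖f.eval (β j)‖ = ∏ i, ‖β j - α i‖ ^ n i := by
    intro j; simp [hf, eval_prod, norm_prod, norm_pow]
  have hqa : ∀ i, ‖(∏ j, (X - C (β j)) ^ m j).eval (α i)‖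
      = ∏ j, ‖α i - β j‖ ^ m j := by
    intro i; simp [eval_prod, norm_prod, norm_pow]
  simp_rw [hfb, hqa, ← Finset.prod_pow]
  rw [Finset.prod_comm]
  simp_rw [pow_right_comm]
  refine Finset.prod_congr rfl fun i _ => Finset.prod_congr rfl fun j _ => ?_
  rw [norm_sub_rev]

open Finset in
private lemma stmt7_keyA {s : ℕ}
    (α : Fin s → ℂ) (hα : Function.Injective α)
    (n : Fin s → ℕ) (hn : ∀ i, 1 ≤ n i) (N : ℕ)
    (f : ℂ[X]) (hf : f = ∏ i, (X - C (α i)) ^ n i)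
    {p : ℕ} (β : Fin p → ℂ) (m : Fin p → ℕ)
    (hder : derivative f =
      C (N : ℂ) * (∏ i, (X - C (α i)) ^ (n i - 1)) * ∏ j, (X - C (β j)) ^ m j)
    (i : Fin s) :
    (N : ℂ) * (∏ j, (X - C (β j)) ^ m j).eval (α i)
      = (n i : ℂ) * ∏ k ∈ univ.erase i, (α i - α k) := by
  set q : ℂ[X] := ∏ j, (X - C (β j)) ^ m j with hq
  set a := α i with ha
  set g : ℂ[X] := ∏ k ∈ univ.erase i, (X - C (α k)) ^ n k with hg
  have hpow : (X - C a) ^ (n i) = (X - C a) ^ (n i - 1) * (X - C a) := by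
    rw [← pow_succ, Nat.sub_add_cancel (hn i)]
  have hfi : f = (X - C a) ^ n i * g := by
    rw [hf, ← Finset.mul_prod_erase univ _ (mem_univ i)]
  have hsplit : (∏ k, (X - C (α k)) ^ (n k - 1)) =
      (X - C a) ^ (n i - 1) * ∏ k ∈ univ.erase i, (X - C (α k)) ^ (n k - 1) :=
    (Finset.mul_prod_erase univ _ (mem_univ i)).symm
  have hderf : derivative f = (X - C a) ^ (n i - 1) *
      (C (n i : ℂ) * g + (X - C a) * derivative g) := by
    rw [hfi, derivative_mul, derivative_X_sub_C_pow, hpow]; ring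
  have hcancel : C (N : ℂ) * (∏ k ∈ univ.erase i, (X - C (α k)) ^ (n k - 1)) * q
      = C (n i : ℂ) * g + (X - C a) * derivative g := by
    apply mul_left_cancel₀ (pow_ne_zero (n i - 1) (X_sub_C_ne_zero (R := ℂ) a))
    calc (X - C a) ^ (n i - 1) *
          (C (N : ℂ) * (∏ k ∈ univ.erase i, (X - C (α k)) ^ (n k - 1)) * q)
        = derivative f := by rw [hder, hsplit]; ring
      _ = _ := by rw [hderf]
  have h1 : (N : ℂ) * (∏ k ∈ univ.erase i, (a - α k) ^ (n k - 1)) * q.eval a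
      = (n i : ℂ) * ∏ k ∈ univ.erase i, (a - α k) ^ n k := by
    have := congrArg (eval a) hcancel
    simpa [hg, eval_prod, eval_mul, eval_add, eval_pow] using this
  have h2 : (∏ k ∈ univ.erase i, (a - α k) ^ n k) =
      (∏ k ∈ univ.erase i, (a - α k) ^ (n k - 1)) * ∏ k ∈ univ.erase i, (a - α k) := by
    rw [← Finset.prod_mul_distrib]
    refine Finset.prod_congr rfl fun k _ => ?_
    rw [← pow_succ, Nat.sub_add_cancel (hn k)]
  have hPne : (∏ k ∈ univ.erase i, (a - α k) ^ (n k - 1)) ≠ 0 := by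
    refine Finset.prod_ne_zero_iff.mpr fun k hk => pow_ne_zero _ (sub_ne_zero.mpr ?_)
    exact fun h => (Finset.mem_erase.mp hk).1 (hα h).symm
  apply mul_right_cancel₀ hPne
  calc (N : ℂ) * q.eval a * ∏ k ∈ univ.erase i, (a - α k) ^ (n k - 1)
      = (N : ℂ) * (∏ k ∈ univ.erase i, (a - α k) ^ (n k - 1)) * q.eval a := by ring
    _ = (n i : ℂ) * ∏ k ∈ univ.erase i, (a - α k) ^ n k := h1
    _ = ((n i : ℂ) * ∏ k ∈ univ.erase i, (a - α k)) *
          ∏ k ∈ univ.erase i, (a - α k) ^ (n k - 1) := by rw [h2]; ring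

/-- Let `α₁,…,α_s ∈ ℂ` be distinct, `n₁,…,n_s ≥ 1` with sum `N`,
`f = ∏ (X−αᵢ)^{nᵢ}`, and suppose `f′ = N ∏ (X−αᵢ)^{nᵢ−1} ∏ (X−βⱼ)^{mⱼ}` with
`β₁,…,β_p` distinct, none equal to any `αᵢ`, and `mⱼ ≥ 1`.  Then
`N! ∏ⱼ |f(βⱼ)|^{mⱼ} ≤ ∏ᵢ nᵢ! ∏_{k≠i} |αᵢ−α_k|^{n_k}`. -/
theorem stmt7 {s p : ℕ}
    (α : Fin s → ℂ) (hα : Function.Injective α)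
    (n : Fin s → ℕ) (hn : ∀ i, 1 ≤ n i) (N : ℕ) (hN : N = ∑ i, n i)
    (f : ℂ[X]) (hf : f = ∏ i, (X - C (α i)) ^ n i)
    (β : Fin p → ℂ) (hβ : Function.Injective β)
    (hβα : ∀ j i, β j ≠ α i)
    (m : Fin p → ℕ) (hm : ∀ j, 1 ≤ m j)
    (hder : derivative f =
      C (N : ℂ) * (∏ i, (X - C (α i)) ^ (n i - 1)) * ∏ j, (X - C (β j)) ^ m j) :
    (N.factorial : ℝ) * ∏ j, ‖f.eval (β j)‖ ^ m j ≤
      ∏ i, (((n i).factorial : ℝ) *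
        ∏ k ∈ Finset.univ.erase i, ‖α i - α k‖ ^ n k) := by
  classical
  rcases Nat.eq_zero_or_pos s with rfl | hs
  · simp [hf, hN] at *
  haveI : Nonempty (Fin s) := Fin.pos_iff_nonempty.mp hs
  have hNpos : 0 < N := by
    rw [hN]
    exact Finset.sum_pos (fun i _ => hn i) Finset.univ_nonempty
  have hNR : (0 : ℝ) < (N : ℝ) := by exact_mod_cast hNpos
  set q : ℂ[X] := ∏ j, (X - C (β j)) ^ m j with hq
  -- the key identity, in absolute values
  have keyA : ∀ i, (N : ℝ) * ‖q.eval (α i)‖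
      = (n i : ℝ) * ∏ k ∈ Finset.univ.erase i, ‖α i - α k‖ := by
    intro i
    have := congrArg (‖·‖) (stmt7_keyA α hα n hn N f hf β m hder i)
    simpa [norm_mul, norm_prod, Complex.norm_natCast] using this
  have habs : ∀ i, ‖q.eval (α i)‖
      = (n i : ℝ) * (∏ k ∈ Finset.univ.erase i, ‖α i - α k‖) / N := by
    intro i
    rw [eq_div_iff (ne_of_gt hNR), mul_comm _ ((N : ℝ))]
    exact keyA i
  -- rewrite the LHS product
  rw [stmt7_lemB α n β m f hf]
  simp_rw [← hq, habs]
  -- notation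
  set D : ℝ := ∏ i, ∏ k ∈ Finset.univ.erase i, ‖α i - α k‖ ^ n k with hD
  have hDnn : 0 ≤ D := by
    refine Finset.prod_nonneg fun i _ => Finset.prod_nonneg fun k _ =>
      pow_nonneg (norm_nonneg _) _
  have hprod : ∏ i, ((n i : ℝ) * (∏ k ∈ Finset.univ.erase i, ‖α i - α k‖) / N) ^ n i
      = (∏ i, (n i : ℝ) ^ n i) * D / (N : ℝ) ^ N := by
    simp_rw [div_pow, mul_pow]
    rw [Finset.prod_div_distrib, Finset.prod_mul_distrib, Finset.prod_pow_eq_pow_sum, ← hN]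
    congr 2
    calc ∏ i, (∏ k ∈ Finset.univ.erase i, ‖α i - α k‖) ^ n i
        = ∏ i, ∏ k ∈ Finset.univ.erase i, ‖α i - α k‖ ^ n i := by
          simp_rw [← Finset.prod_pow]
      _ = D := stmt7_swapC (fun i k => ‖α i - α k‖)
          (fun i k => norm_sub_rev _ _) n
  rw [hprod]
  have hRHS : ∏ i, (((n i).factorial : ℝ) *
      ∏ k ∈ Finset.univ.erase i, ‖α i - α k‖ ^ n k)
      = (∏ i, ((n i).factorial : ℝ)) * D := Finset.prod_mul_distrib
  rw [hRHS]
  have hfinal : (N.factorial : ℝ) * ((∏ i, (n i : ℝ) ^ n i) * D / (N : ℝ) ^ N)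
      = ((N.factorial : ℝ) * (∏ i, (n i : ℝ) ^ n i) / (N : ℝ) ^ N) * D := by ring
  rw [hfinal]
  apply mul_le_mul_of_nonneg_right _ hDnn
  rw [div_le_iff₀ (pow_pos hNR N)]
  have := stmt7_combC n
  rw [← hN] at this
  calc (N.factorial : ℝ) * ∏ i, (n i : ℝ) ^ n i
      = ((N.factorial * ∏ i, (n i) ^ (n i) : ℕ) : ℝ) := by push_cast; ring
    _ ≤ ((N ^ N * ∏ i, (n i).factorial : ℕ) : ℝ) := by exact_mod_cast this
    _ = (∏ i, ((n i).factorial : ℝ)) * (N : ℝ) ^ N := by push_cast; ring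
end

section
/- Let F be a field equipped with a multiplicative nonarchimedean absolute value ‖·‖ (satisfying ‖x+y‖ ≤ max(‖x‖,‖y‖)), let A be a finite nonempty subset of F, and let α₀ ∈ A. Then there exists a function pr : A → A such that: (1) pr(α₀) = α₀ and pr(β) ≠ β for every β ∈ A with β ≠ α₀; (2) for every β ∈ A there exists k ∈ ℕ with pr^[k](β) = α₀; (3) for all α, β, γ ∈ A with β ≠ α₀ and pr(β) = α, one has: ( ∃ k ≥ 1 with pr^[k](γ) = β ) if and only if ( ‖α − β‖ > ‖β − γ‖ and ‖β − γ‖ > 0 ). -/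
private lemma stmt14_ueq {F : Type*} [Field F] (v : AbsoluteValue F ℝ)
    (hna : ∀ x y : F, v (x + y) ≤ max (v x) (v y))
    {a b : F} (h : v b < v a) : v (a + b) = v a := by
  refine le_antisymm ((hna a b).trans (max_le le_rfl h.le)) ?_
  by_contra hc
  push_neg at hc
  have h2 := hna (a + b) (-b)
  rw [add_neg_cancel_right, v.map_neg] at h2
  exact absurd h2 (not_le.2 (max_lt hc h))

private lemma stmt14_aux {F : Type*} [Field F] (v : AbsoluteValue F ℝ)
    (hna : ∀ x y : F, v (x + y) ≤ max (v x) (v y))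
    {n : ℕ} [NeZero n] (x : Fin n → F) (hx : Function.Injective x) :
    ∃ pr : Fin n → Fin n,
      pr 0 = 0 ∧ (∀ i : Fin n, i ≠ 0 → pr i < i) ∧
      (∀ i : Fin n, ∃ k : ℕ, pr^[k] i = 0) ∧
      (∀ i g : Fin n, i ≠ 0 →
        ((∃ k : ℕ, pr^[k + 1] g = i) ↔
          (v (x i - x g) < v (x (pr i) - x i) ∧ 0 < v (x i - x g)))) := by
  classical
  have hpos : ∀ a b : Fin n, a ≠ b → 0 < v (x a - x b) := fun a b h =>
    v.pos (sub_ne_zero.2 fun e => h (hx e))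
  -- choice of nearest earlier point with minimal index among ties
  have hex : ∀ i : Fin n, i ≠ 0 → ∃ p : Fin n, p < i ∧
      (∀ j, j < i → v (x p - x i) ≤ v (x j - x i)) ∧
      (∀ j, j < i → v (x j - x i) = v (x p - x i) → p ≤ j) := by
    intro i hi
    have h0i : (0 : Fin n) < i := (Fin.pos_iff_ne_zero' i).2 hi
    have hSne : (Finset.univ.filter (fun j : Fin n => j < i)).Nonempty :=
      ⟨0, Finset.mem_filter.2 ⟨Finset.mem_univ _, h0i⟩⟩
    set S := Finset.univ.filter (fun j : Fin n => j < i)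
    set m := S.inf' hSne (fun j => v (x j - x i))
    have hTne : (S.filter (fun j => v (x j - x i) = m)).Nonempty := by
      obtain ⟨j, hj, hje⟩ := Finset.exists_mem_eq_inf' hSne (fun j => v (x j - x i))
      exact ⟨j, Finset.mem_filter.2 ⟨hj, hje.symm⟩⟩
    set p := (S.filter (fun j => v (x j - x i) = m)).min' hTne with hp
    have hpmem := Finset.min'_mem _ hTne
    have hpS : p ∈ S := (Finset.mem_filter.1 hpmem).1
    have hpval : v (x p - x i) = m := (Finset.mem_filter.1 hpmem).2
    have hpi : p < i := (Finset.mem_filter.1 hpS).2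
    refine ⟨p, hpi, ?_, ?_⟩
    · intro j hj
      rw [hpval]
      have hjS : j ∈ S := Finset.mem_filter.2 ⟨Finset.mem_univ _, hj⟩
      exact Finset.inf'_le _ hjS
    · intro j hj hje
      have hjS : j ∈ S := Finset.mem_filter.2 ⟨Finset.mem_univ _, hj⟩
      have hjT : j ∈ S.filter (fun j' => v (x j' - x i) = m) :=
        Finset.mem_filter.2 ⟨hjS, by rw [hje, hpval]⟩
      exact Finset.min'_le _ j hjT
  choose f hf1 hf2 hf3 using hex
  obtain ⟨pr, hpr0, hprf⟩ :
      ∃ pr : Fin n → Fin n, pr 0 = 0 ∧ ∀ (i : Fin n) (h : i ≠ 0), pr i = f i h :=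
    ⟨fun i => if h : i = 0 then 0 else f i h, by simp, fun i h => by simp [h]⟩
  have hlt : ∀ i : Fin n, i ≠ 0 → pr i < i := fun i h => by rw [hprf i h]; exact hf1 i h
  have hmin : ∀ (i : Fin n) (h : i ≠ 0), ∀ j, j < i → v (x (pr i) - x i) ≤ v (x j - x i) :=
    fun i h j hj => by rw [hprf i h]; exact hf2 i h j hj
  have htie : ∀ (i : Fin n) (h : i ≠ 0), ∀ j, j < i →
      v (x j - x i) = v (x (pr i) - x i) → pr i ≤ j := by
    intro i h j hj hje
    rw [hprf i h]
    exact hf3 i h j hj (by rw [hje, hprf i h])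
  have hiter0 : ∀ m : ℕ, pr^[m] (0 : Fin n) = 0 := fun m => Function.iterate_fixed hpr0 m
  -- Lemma A : a child's distance to its parent is smaller than the parent's distance
  -- to the grandparent.
  have childA : ∀ i k : Fin n, i ≠ 0 → pr k = i → v (x i - x k) < v (x (pr i) - x i) := by
    intro i k hi hk
    have hk0 : k ≠ 0 := by rintro rfl; rw [hpr0] at hk; exact hi hk.symm
    have hik : i < k := hk ▸ hlt k hk0
    have hpi : pr i < i := hlt i hi
    by_contra hcon
    push_neg at hcon
    have h1 : v (x (pr i) - x k) ≤ v (x i - x k) := by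
      have h' := hna (x (pr i) - x i) (x i - x k)
      rw [sub_add_sub_cancel] at h'
      exact h'.trans (max_le hcon le_rfl)
    have h2 : v (x i - x k) ≤ v (x (pr i) - x k) := by
      have h' := hmin k hk0 (pr i) (hpi.trans hik)
      rwa [hk] at h'
    have h3 : pr k ≤ pr i := htie k hk0 (pr i) (hpi.trans hik)
      (by rw [hk]; exact le_antisymm h1 h2)
    rw [hk] at h3
    exact absurd h3 (not_le.2 hpi)
  -- Lemma B : descendants are in the punctured open ball.
  have descB : ∀ k : ℕ, ∀ g i : Fin n, i ≠ 0 → pr^[k + 1] g = i →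
      v (x i - x g) < v (x (pr i) - x i) ∧ v (x (pr g) - x g) ≤ v (x i - x g) := by
    intro k
    induction k with
    | zero =>
      intro g i hi hg
      rw [Function.iterate_one] at hg
      exact ⟨childA i g hi hg, le_of_eq (by rw [hg])⟩
    | succ k ih =>
      intro g i hi hg
      rw [Function.iterate_succ_apply] at hg
      obtain ⟨h1, h2⟩ := ih (pr g) i hi hg
      have hg'0 : pr g ≠ 0 := by
        intro e
        rw [e, hiter0] at hg
        exact hi hg.symm
      have hA : v (x (pr g) - x g) < v (x (pr (pr g)) - x (pr g)) := childA (pr g) g hg'0 rfl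
      have hlt2 : v (x (pr g) - x g) < v (x i - x (pr g)) := hA.trans_le h2
      have heq : v (x i - x g) = v (x i - x (pr g)) := by
        have h' := stmt14_ueq v hna hlt2
        rwa [sub_add_sub_cancel] at h'
      constructor
      · rw [heq]; exact h1
      · rw [heq]; exact hlt2.le
  -- Lemma C : every point of the punctured open ball is a descendant.
  have descC : ∀ N : ℕ, ∀ g i : Fin n, g.val < N → i ≠ 0 →
      v (x i - x g) < v (x (pr i) - x i) → 0 < v (x i - x g) →
      ∃ k : ℕ, pr^[k + 1] g = i := by
    intro N
    induction N with
    | zero => intro g i h; exact absurd h (Nat.not_lt_zero _)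
    | succ N ih =>
      intro g i hgN hi hb hp
      have hgi : g ≠ i := by
        rintro rfl
        simp at hp
      have hnot : ¬ g < i := by
        intro hgi'
        have h' := hmin i hi g hgi'
        rw [v.map_sub (x g) (x i)] at h'
        exact absurd (h'.trans_lt hb) (lt_irrefl _)
      have hig : i < g := lt_of_le_of_ne (not_lt.1 hnot) (Ne.symm hgi)
      have hg0 : g ≠ 0 := by
        have h0g : (0 : Fin n) < g := lt_of_le_of_lt (Fin.zero_le i) hig
        exact ((Fin.pos_iff_ne_zero' g).1 h0g)
      have hq : v (x (pr g) - x g) ≤ v (x i - x g) := hmin g hg0 i hig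
      by_cases hqi : pr g = i
      · exact ⟨0, by rw [Function.iterate_one]; exact hqi⟩
      · have hqg : pr g < g := hlt g hg0
        have hviq : v (x i - x (pr g)) ≤ v (x i - x g) := by
          have h' := hna (x i - x g) (x g - x (pr g))
          rw [sub_add_sub_cancel] at h'
          refine h'.trans (max_le le_rfl ?_)
          rwa [v.map_sub (x g) (x (pr g))]
        have hposq : 0 < v (x i - x (pr g)) := hpos i (pr g) (Ne.symm hqi)
        obtain ⟨k, hk⟩ := ih (pr g) i (by have h'' := Fin.lt_def.1 hqg; omega) hi
          (hviq.trans_lt hb) hposq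
        exact ⟨k + 1, by rw [Function.iterate_succ_apply]; exact hk⟩
  -- termination
  have term : ∀ N : ℕ, ∀ g : Fin n, g.val < N → ∃ k : ℕ, pr^[k] g = 0 := by
    intro N
    induction N with
    | zero => intro g h; exact absurd h (Nat.not_lt_zero _)
    | succ N ih =>
      intro g hg
      by_cases h0 : g = 0
      · exact ⟨0, by simp [h0]⟩
      · obtain ⟨k, hk⟩ := ih (pr g) (by have h'' := Fin.lt_def.1 (hlt g h0); omega)
        exact ⟨k + 1, by rw [Function.iterate_succ_apply]; exact hk⟩
  refine ⟨pr, hpr0, hlt, fun i => term (i.val + 1) i (Nat.lt_succ_self _), ?_⟩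
  intro i g hi
  constructor
  · rintro ⟨k, hk⟩
    have hg0 : g ≠ 0 := by
      rintro rfl
      rw [hiter0] at hk
      exact hi hk.symm
    obtain ⟨h1, h2⟩ := descB k g i hi hk
    have hppos : 0 < v (x (pr g) - x g) := hpos (pr g) g (hlt g hg0).ne
    exact ⟨h1, hppos.trans_le h2⟩
  · rintro ⟨hb, hp⟩
    exact descC (g.val + 1) g i (Nat.lt_succ_self _) hi hb hp

/-- Let `F` be a field with a multiplicative nonarchimedean absolute
value, `A ⊆ F` finite nonempty and `α₀ ∈ A`.  There is a parent function `pr : A → A`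
encoding a rooted tree with root `α₀`: `α₀` is the unique fixed point, every vertex
reaches `α₀` by iteration, and for `β ≠ α₀` with parent `α`, the descendants of `β`
are exactly the `γ` with `‖α−β‖ > ‖β−γ‖ > 0`. -/
theorem stmt14 {F : Type*} [Field F] (v : AbsoluteValue F ℝ)
    (hna : ∀ x y : F, v (x + y) ≤ max (v x) (v y))
    (A : Finset F) (α₀ : F) (hα₀ : α₀ ∈ A) :
    ∃ pr : A → A,
      (pr ⟨α₀, hα₀⟩ = ⟨α₀, hα₀⟩ ∧ ∀ β : A, β ≠ ⟨α₀, hα₀⟩ → pr β ≠ β) ∧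
      (∀ β : A, ∃ k : ℕ, pr^[k] β = ⟨α₀, hα₀⟩) ∧
      (∀ α β γ : A, β ≠ ⟨α₀, hα₀⟩ → pr β = α →
        ((∃ k : ℕ, 1 ≤ k ∧ pr^[k] γ = β) ↔
          (v ((β : F) - (γ : F)) < v ((α : F) - (β : F)) ∧
            0 < v ((β : F) - (γ : F))))) := by
  classical
  haveI : NeZero A.card := ⟨(Finset.card_pos.2 ⟨α₀, hα₀⟩).ne'⟩
  obtain ⟨e, he⟩ : ∃ e : A ≃ Fin A.card, e ⟨α₀, hα₀⟩ = 0 :=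
    ⟨A.equivFin.trans (Equiv.swap (A.equivFin ⟨α₀, hα₀⟩) 0), by simp⟩
  set x : Fin A.card → F := fun i => ((e.symm i : A) : F) with hxdef
  have hxinj : Function.Injective x := fun a b h => e.symm.injective (Subtype.ext h)
  have hxe : ∀ a : A, x (e a) = (a : F) := fun a => by
    rw [hxdef]; simp
  obtain ⟨pr', hpr0, hprlt, hterm, hdesc⟩ := stmt14_aux v hna x hxinj
  have he0 : ∀ a : A, a ≠ ⟨α₀, hα₀⟩ → e a ≠ 0 := by
    intro a ha h
    exact ha (e.injective (by rw [h, he]))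
  have hsymm0 : e.symm 0 = ⟨α₀, hα₀⟩ := by rw [← he, Equiv.symm_apply_apply]
  have hIter : ∀ (k : ℕ) (a : A),
      (fun a : A => e.symm (pr' (e a)))^[k] a = e.symm (pr'^[k] (e a)) := by
    intro k
    induction k with
    | zero => intro a; simp
    | succ k ih =>
      intro a
      rw [Function.iterate_succ_apply, Function.iterate_succ_apply]
      exact (ih _).trans (by rw [Equiv.apply_symm_apply])
  refine ⟨fun a => e.symm (pr' (e a)), ⟨?_, ?_⟩, ?_, ?_⟩
  · show e.symm (pr' (e ⟨α₀, hα₀⟩)) = ⟨α₀, hα₀⟩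
    rw [he, hpr0, hsymm0]
  · intro β hβ h
    have h' : pr' (e β) = e β := by
      have := congrArg e h
      rwa [Equiv.apply_symm_apply] at this
    exact (hprlt (e β) (he0 β hβ)).ne h'
  · -- part 2
    intro β
    obtain ⟨k, hk⟩ := hterm (e β)
    exact ⟨k, by rw [hIter, hk, hsymm0]⟩
  · -- part 3
    intro α β γ hβ hprβ
    have heβ : e β ≠ 0 := he0 β hβ
    have hpr'β : pr' (e β) = e α := by
      have := congrArg e hprβ
      rwa [Equiv.apply_symm_apply] at this
    have hviff := hdesc (e β) (e γ) heβ
    rw [hpr'β, hxe, hxe, hxe] at hviff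
    constructor
    · rintro ⟨k, hk1, hk2⟩
      obtain ⟨m, rfl⟩ : ∃ m, k = m + 1 := ⟨k - 1, by omega⟩
      rw [hIter] at hk2
      have hk3 : pr'^[m + 1] (e γ) = e β := by
        have := congrArg e hk2
        rwa [Equiv.apply_symm_apply] at this
      exact hviff.1 ⟨m, hk3⟩
    · intro hb
      obtain ⟨k, hk⟩ := hviff.2 hb
      refine ⟨k + 1, by omega, ?_⟩
      rw [hIter, hk, Equiv.symm_apply_apply]
end

section
/- Let K be a field of characteristic zero and α₁, …, α_s ∈ K distinct. (1) For every n = (n₁, …, n_s) ∈ ℕ^s one has a_n = (f_n(α₁), …, f_n(α_s)) + Σ_{j=1}^s n_j·a_{n−e_j}, where a term n_j·a_{n−e_j} is interpreted as 0 whenever n_j = 0. (2) For every n ∈ ℕ^s and k, ℓ ∈ {1, …, s} with n_k ≥ 1 one has a_{n+e_ℓ−e_k} = a_n + (α_k − α_ℓ)·a_{n−e_k}. -/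
open Polynomial

section Aux
variable {K : Type*} [Field K] {s : ℕ}
open Finset


lemma fpoly_natDegree (α : Fin s → K) (m : Fin s → ℕ) : (fpoly α m).natDegree = ∑ i, m i := by
  unfold fpoly
  rw [natDegree_prod]
  · simp [natDegree_pow]
  · intro i _
    exact pow_ne_zero _ (X_sub_C_ne_zero (α i))

lemma fpoly_succ (α : Fin s → K) (m : Fin s → ℕ) (j : Fin s) :
    fpoly α (fun t => m t + if t = j then 1 else 0) = (X - C (α j)) * fpoly α m := by
  unfold fpoly
  rw [← Finset.mul_prod_erase _ _ (Finset.mem_univ j),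
      ← Finset.mul_prod_erase _ (fun t => (X - C (α t)) ^ m t) (Finset.mem_univ j)]
  beta_reduce
  have hprod : ∏ x ∈ Finset.univ.erase j, (X - C (α x)) ^ (m x + if x = j then 1 else 0) =
      ∏ x ∈ Finset.univ.erase j, (X - C (α x)) ^ m x :=
    Finset.prod_congr rfl fun t ht => by rw [if_neg (Finset.ne_of_mem_erase ht), add_zero]
  rw [hprod, if_pos rfl, pow_succ', mul_assoc]

lemma deriv_fpoly (α : Fin s → K) (n : Fin s → ℕ) :
    derivative (fpoly α n) =
      ∑ j, C (n j : K) * fpoly α (fun t => n t - if t = j then 1 else 0) := by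
  unfold fpoly
  have h : ∏ i, (X - C (α i)) ^ n i = (Multiset.map (fun i => (X - C (α i)) ^ n i) Finset.univ.val).prod := rfl
  rw [h, derivative_prod]
  have hsum : (Multiset.map (fun i => (Multiset.map (fun i => (X - C (α i)) ^ n i) (Finset.univ.val.erase i)).prod * derivative ((X - C (α i)) ^ n i)) Finset.univ.val).sum
      = ∑ i, (∏ t ∈ Finset.univ.erase i, (X - C (α t)) ^ n t) * derivative ((X - C (α i)) ^ n i) := by
    rfl
  rw [hsum]
  apply Finset.sum_congr rfl
  intro j _
  rw [derivative_X_sub_C_pow,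
    ← Finset.mul_prod_erase _ (fun t => (X - C (α t)) ^ (n t - if t = j then 1 else 0))
      (Finset.mem_univ j)]
  beta_reduce
  have hprod : ∏ x ∈ Finset.univ.erase j, (X - C (α x)) ^ (n x - if x = j then 1 else 0) =
      ∏ x ∈ Finset.univ.erase j, (X - C (α x)) ^ n x :=
    Finset.prod_congr rfl fun t ht => by rw [if_neg (Finset.ne_of_mem_erase ht), Nat.sub_zero]
  rw [hprod, if_pos rfl]
  ring


noncomputable def Spoly (α : Fin s → K) (m : Fin s → ℕ) (N : ℕ) : K[X] :=
  ∑ k ∈ Finset.range N, derivative^[k] (fpoly α m)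

lemma Spoly_eq_of_le (α : Fin s → K) (m : Fin s → ℕ) {N N' : ℕ}
    (h : (∑ i, m i) + 1 ≤ N) (h' : N ≤ N') : Spoly α m N = Spoly α m N' := by
  unfold Spoly
  apply Finset.sum_subset (Finset.range_subset_range.2 h')
  intro x _ hx
  apply iterate_derivative_eq_zero
  rw [fpoly_natDegree]
  simp only [Finset.mem_range, not_lt] at hx
  omega

lemma Ppoly_eq_Spoly (α : Fin s → K) (m : Fin s → ℕ) :
    Ppoly α m = Spoly α m ((∑ i, m i) + 1) := rfl

lemma iter_deriv_add (p q : K[X]) (x : ℕ) :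
    derivative^[x] (p + q) = derivative^[x] p + derivative^[x] q := by
  simp_rw [← Module.End.pow_apply, map_add]

lemma Spoly_rec (α : Fin s → K) (m : Fin s → ℕ) {N : ℕ} (hN : (∑ i, m i) + 1 ≤ N) :
    Spoly α m N = fpoly α m + derivative (Spoly α m N) := by
  have hder : derivative (Spoly α m N) =
      ∑ k ∈ Finset.range N, derivative^[k + 1] (fpoly α m) := by
    unfold Spoly
    rw [derivative_sum]
    exact Finset.sum_congr rfl fun k _ => (Function.iterate_succ_apply' derivative k _).symm
  have hz : derivative^[N] (fpoly α m) = 0 := by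
    apply iterate_derivative_eq_zero
    rw [fpoly_natDegree]; omega
  have h : Spoly α m N - derivative (Spoly α m N) = fpoly α m := by
    rw [hder]
    unfold Spoly
    rw [← Finset.sum_sub_distrib,
      Finset.sum_range_sub' (fun k => derivative^[k] (fpoly α m)), hz, sub_zero]
    simp
  linear_combination h

lemma P_rec1 (α : Fin s → K) (n : Fin s → ℕ) :
    Ppoly α n = fpoly α n +
      ∑ j, C (n j : K) * Ppoly α (fun t => n t - if t = j then 1 else 0) := by
  set N := (∑ i, n i) + 1 with hNdef
  have hN : (∑ i, n i) + 1 ≤ N := le_refl _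
  rw [Ppoly_eq_Spoly, Spoly_rec α n hN]
  congr 1
  have hder : derivative (Spoly α n N) =
      ∑ k ∈ Finset.range N, derivative^[k] (derivative (fpoly α n)) := by
    unfold Spoly
    rw [derivative_sum]
    exact Finset.sum_congr rfl fun k _ => by
      rw [← Function.iterate_succ_apply' derivative k, Function.iterate_succ_apply]
  rw [hder]
  have h1 : ∀ k ∈ Finset.range N,
      derivative^[k] (derivative (fpoly α n)) =
      ∑ j, C (n j : K) * derivative^[k] (fpoly α (fun t => n t - if t = j then 1 else 0)) := by
    intro k _
    rw [deriv_fpoly, iterate_derivative_sum]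
    exact Finset.sum_congr rfl fun j _ => iterate_derivative_C_mul _ _ _
  rw [Finset.sum_congr rfl h1, Finset.sum_comm]
  apply Finset.sum_congr rfl
  intro j _
  rw [← Finset.mul_sum]
  congr 1
  have hrfl : ∑ i ∈ Finset.range N, derivative^[i]
      (fpoly α fun t => n t - if t = j then 1 else 0) =
      Spoly α (fun t => n t - if t = j then 1 else 0) N := rfl
  rw [hrfl, Ppoly_eq_Spoly]
  refine (Spoly_eq_of_le α _ (le_refl _) ?_).symm
  have := Finset.sum_le_sum (s := Finset.univ)
    (fun t (_ : t ∈ Finset.univ) => Nat.sub_le (n t) (if t = j then 1 else 0))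
  omega

lemma P_rec2 (α : Fin s → K) (n : Fin s → ℕ) (k ℓ : Fin s) (hk : 1 ≤ n k) :
    Ppoly α (fun t => n t + (if t = ℓ then 1 else 0) - if t = k then 1 else 0) =
      Ppoly α n + C (α k - α ℓ) * Ppoly α (fun t => n t - if t = k then 1 else 0) := by
  set m : Fin s → ℕ := fun t => n t - if t = k then 1 else 0 with hm
  have hB : ∀ u, (if u = k then 1 else 0) ≤ n u := by
    intro u
    by_cases h : u = k
    · rw [if_pos h, h]; exact hk
    · rw [if_neg h]; omega
  have hn : n = fun t => m t + if t = k then 1 else 0 := by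
    funext u
    simp only [hm]
    have := hB u
    omega
  have hn' : (fun t => n t + (if t = ℓ then 1 else 0) - if t = k then 1 else 0) =
      fun t => m t + if t = ℓ then 1 else 0 := by
    funext u
    simp only [hm]
    have := hB u
    omega
  have hfn : fpoly α n = (X - C (α k)) * fpoly α m := by
    conv_lhs => rw [hn]
    exact fpoly_succ α m k
  have hf : fpoly α (fun t => n t + (if t = ℓ then 1 else 0) - if t = k then 1 else 0) =
      fpoly α n + C (α k - α ℓ) * fpoly α m := by
    rw [hn', fpoly_succ α m ℓ, hfn, C_sub]; ring
  have hsum_e : ∀ j : Fin s, ∑ t, (m t + if t = j then 1 else 0) = (∑ t, m t) + 1 := by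
    intro j
    rw [Finset.sum_add_distrib]
    simp
  set N := (∑ i, n i) + 1 with hNdef
  have hSn : ∑ t, n t = (∑ t, m t) + 1 := by
    conv_lhs => rw [hn]
    rw [hsum_e k]
  have hS' : ∑ t, (n t + (if t = ℓ then 1 else 0) - if t = k then 1 else 0) = ∑ t, n t := by
    conv_lhs => rw [show (fun t => n t + (if t = ℓ then 1 else 0) - if t = k then 1 else 0) =
      fun t => m t + if t = ℓ then 1 else 0 from hn']
    rw [hsum_e ℓ, hSn]
  have e1 : Ppoly α (fun t => n t + (if t = ℓ then 1 else 0) - if t = k then 1 else 0) =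
      Spoly α (fun t => n t + (if t = ℓ then 1 else 0) - if t = k then 1 else 0) N := by
    rw [Ppoly_eq_Spoly, hS']
  have e3 : Ppoly α m = Spoly α m N := by
    rw [Ppoly_eq_Spoly]
    exact Spoly_eq_of_le α _ (le_refl _) (by omega)
  rw [e1, Ppoly_eq_Spoly α n, e3]
  unfold Spoly
  rw [Finset.mul_sum, ← Finset.sum_add_distrib]
  apply Finset.sum_congr rfl
  intro x _
  rw [hf, iter_deriv_add, iterate_derivative_C_mul]

end Aux

/-- **recurrence relations.**
(1) `a_n = (f_n(α₁),…,f_n(α_s)) + Σⱼ nⱼ a_{n−eⱼ}` (the `j`-th term vanishing when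
`nⱼ = 0`);
(2) if `n_k ≥ 1` then `a_{n+e_ℓ−e_k} = a_n + (α_k − α_ℓ) a_{n−e_k}`. -/
theorem stmt16 {K : Type*} [Field K] [CharZero K] {s : ℕ} (α : Fin s → K)
    (hα : Function.Injective α) :
    (∀ n : Fin s → ℕ, ∀ i : Fin s,
      aH α n i = (fpoly α n).eval (α i) +
        ∑ j, (n j : K) * aH α (fun k => n k - if k = j then 1 else 0) i) ∧
    (∀ n : Fin s → ℕ, ∀ k ℓ : Fin s, 1 ≤ n k → ∀ i : Fin s,
      aH α (fun t => n t + (if t = ℓ then 1 else 0) - if t = k then 1 else 0) i =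
        aH α n i + (α k - α ℓ) * aH α (fun t => n t - if t = k then 1 else 0) i) := by
  constructor
  · intro n i
    unfold aH
    rw [P_rec1 α n]
    simp [eval_finset_sum]
  · intro n k ℓ hk i
    unfold aH
    rw [P_rec2 α n k ℓ hk]
    simp
end

section
/- Let K be a field of characteristic zero, let α ∈ K be nonzero, and take s = 2 with α₁ = 0 and α₂ = α. For every integer n ≥ 1, the 2×2 matrix [[P_{(n−1,n)}(0), P_{(n−1,n)}(α)], [P_{(n,n−1)}(0), P_{(n,n−1)}(α)]] equals (n−1)! · C_n · C_{n−1} · ⋯ · C_1, where for each i ≥ 1, C_i = [[2i−1−α, 2i−1], [2i−1, 2i−1+α]]. -/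
set_option linter.unusedSectionVars false


open Polynomial

/-- `f_{(a,b)}(z) = z^a (z − α)^b`. -/
noncomputable def fm {K : Type*} [Field K] (α : K) (a b : ℕ) : K[X] :=
  X ^ a * (X - C α) ^ b

/-- `P_{(a,b)}(z) = Σ_{k=0}^{a+b} f_{(a,b)}^{(k)}(z)`. -/
noncomputable def Pm {K : Type*} [Field K] (α : K) (a b : ℕ) : K[X] :=
  ∑ k ∈ Finset.range (a + b + 1), derivative^[k] (fm α a b)

/-- The matrix `C_i = [[2i−1−α, 2i−1], [2i−1, 2i−1+α]]`. -/
noncomputable def Cmat {K : Type*} [Field K] (α : K) (i : ℕ) : Matrix (Fin 2) (Fin 2) K :=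
  !![2 * (i : K) - 1 - α, 2 * (i : K) - 1; 2 * (i : K) - 1, 2 * (i : K) - 1 + α]

namespace Stmt18Aux

variable {K : Type*} [Field K] [CharZero K]

noncomputable def S (N : ℕ) (p : K[X]) : K[X] := ∑ k ∈ Finset.range N, derivative^[k] p

lemma S_add (N : ℕ) (p q : K[X]) : S N (p + q) = S N p + S N q := by
  simp [S, iterate_map_add, Finset.sum_add_distrib]

lemma S_C_mul (N : ℕ) (a : K) (p : K[X]) : S N (C a * p) = C a * S N p := by
  simp [S, iterate_derivative_C_mul, Finset.mul_sum]

lemma S_congr (p : K[X]) {N M : ℕ} (h : p.natDegree < N) (hNM : N ≤ M) :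
    S M p = S N p := by
  refine (Finset.sum_subset (Finset.range_subset_range.2 hNM) fun k _ hk => ?_).symm
  have hNk : N ≤ k := le_of_not_gt (fun hc => hk (Finset.mem_range.2 hc))
  exact iterate_derivative_eq_zero (lt_of_lt_of_le h hNk)

lemma S_deriv (p : K[X]) {N : ℕ} (h : p.natDegree < N) :
    S N (derivative p) = S N p - p := by
  have h3 : S N (derivative p) = ∑ k ∈ Finset.range N, derivative^[k + 1] p := by
    simp [S, Function.iterate_succ_apply]
  have h1 : S (N + 1) p = (∑ k ∈ Finset.range N, derivative^[k + 1] p) + p := by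
    simpa [S] using Finset.sum_range_succ' (fun k => derivative^[k] p) N
  have h2 : S (N + 1) p = S N p := S_congr p h (Nat.le_succ N)
  rw [h3, eq_sub_iff_add_eq, ← h1, h2]

lemma natDegree_fm_le (α : K) (a b : ℕ) : (fm α a b).natDegree ≤ a + b := by
  refine le_trans (natDegree_mul_le) ?_
  have h1 : (X ^ a : K[X]).natDegree ≤ a := by simp [natDegree_X_pow]
  have h2 : ((X - C α) ^ b : K[X]).natDegree ≤ b := by
    simpa [natDegree_X_sub_C] using natDegree_pow_le (p := (X - C α : K[X])) (n := b)
  omega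

noncomputable def h₁ (α : K) (m : ℕ) : K[X] :=
  -(X ^ (m + 1) * (X - C α) ^ (m + 1) * (X - C α + C (2 * (m : K) + 3)))

noncomputable def h₂ (α : K) (m : ℕ) : K[X] :=
  -(X ^ (m + 1) * (X - C α) ^ (m + 1) * (X + C (2 * (m : K) + 3)))

lemma natDegree_h₁_le (α : K) (m : ℕ) : (h₁ α m).natDegree ≤ 2 * m + 3 := by
  rw [h₁, natDegree_neg]
  refine le_trans natDegree_mul_le ?_
  have h0 : ((X : K[X]) - C α + C (2 * (m : K) + 3)).natDegree ≤ 1 := by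
    refine le_trans (natDegree_add_le _ _) ?_
    rw [natDegree_X_sub_C, natDegree_C]
    omega
  have h1 : ((X : K[X]) ^ (m+1) * (X - C α) ^ (m+1)).natDegree ≤ 2 * m + 2 := by
    refine le_trans natDegree_mul_le ?_
    have := natDegree_pow_le (p := (X - C α : K[X])) (n := m + 1)
    simp only [natDegree_X_pow, natDegree_X_sub_C, mul_one] at *
    omega
  omega

lemma natDegree_h₂_le (α : K) (m : ℕ) : (h₂ α m).natDegree ≤ 2 * m + 3 := by
  rw [h₂, natDegree_neg]
  refine le_trans natDegree_mul_le ?_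
  have h0 : ((X : K[X]) + C (2 * (m : K) + 3)).natDegree ≤ 1 := by
    refine le_trans (natDegree_add_le _ _) ?_
    rw [natDegree_X, natDegree_C]
    omega
  have h1 : ((X : K[X]) ^ (m+1) * (X - C α) ^ (m+1)).natDegree ≤ 2 * m + 2 := by
    refine le_trans natDegree_mul_le ?_
    have := natDegree_pow_le (p := (X - C α : K[X])) (n := m + 1)
    simp only [natDegree_X_pow, natDegree_X_sub_C, mul_one] at *
    omega
  omega

lemma key1 (α : K) (m : ℕ) :
    fm α (m + 1) (m + 2)
      = C (((m : K) + 1) * (2 * m + 3 - α)) * fm α m (m + 1)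
        + C (((m : K) + 1) * (2 * m + 3)) * fm α (m + 1) m
        + (derivative (h₁ α m) - h₁ α m) := by
  have hd : derivative (h₁ α m)
      = -(C ((m : K) + 1) * X ^ m * (X - C α) ^ (m + 1) * (X - C α + C (2 * (m : K) + 3))
          + C ((m : K) + 1) * X ^ (m + 1) * (X - C α) ^ m * (X - C α + C (2 * (m : K) + 3))
          + X ^ (m + 1) * (X - C α) ^ (m + 1)) := by
    simp [h₁, derivative_mul, derivative_pow, derivative_X_pow]
    ring
  rw [hd, h₁, fm, fm, fm]
  simp only [map_mul, map_add, map_sub, C_eq_natCast, map_ofNat, C_1]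
  push_cast
  ring

lemma key2 (α : K) (m : ℕ) :
    fm α (m + 2) (m + 1)
      = C (((m : K) + 1) * (2 * m + 3)) * fm α m (m + 1)
        + C (((m : K) + 1) * (2 * m + 3 + α)) * fm α (m + 1) m
        + (derivative (h₂ α m) - h₂ α m) := by
  have hd : derivative (h₂ α m)
      = -(C ((m : K) + 1) * X ^ m * (X - C α) ^ (m + 1) * (X + C (2 * (m : K) + 3))
          + C ((m : K) + 1) * X ^ (m + 1) * (X - C α) ^ m * (X + C (2 * (m : K) + 3))
          + X ^ (m + 1) * (X - C α) ^ (m + 1)) := by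
    simp [h₂, derivative_mul, derivative_pow, derivative_X_pow]
    ring
  rw [hd, h₂, fm, fm, fm]
  simp only [map_mul, map_add, map_sub, C_eq_natCast, map_ofNat, C_1]
  ring

lemma S_neg (N : ℕ) (p : K[X]) : S N (-p) = -S N p := by
  simp [S, iterate_map_neg]

lemma S_sub (N : ℕ) (p q : K[X]) : S N (p - q) = S N p - S N q := by
  rw [sub_eq_add_neg, S_add, S_neg, sub_eq_add_neg]

lemma S_deriv_sub (p : K[X]) {N : ℕ} (h : p.natDegree < N) :
    S N (derivative p - p) = -p := by
  rw [S_sub, S_deriv p h]; ring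

lemma Pm_eq_S (α : K) (a b : ℕ) : Pm α a b = S (a + b + 1) (fm α a b) := rfl

lemma Pm_eq_S' (α : K) (a b N : ℕ) (hN : a + b + 1 ≤ N) :
    S N (fm α a b) = Pm α a b := by
  rw [Pm_eq_S]
  exact S_congr _ (lt_of_le_of_lt (natDegree_fm_le α a b) (Nat.lt_succ_self _)) hN

lemma Pm_succ₁ (α : K) (m : ℕ) :
    Pm α (m + 1) (m + 2)
      = C (((m : K) + 1) * (2 * m + 3 - α)) * Pm α m (m + 1)
        + C (((m : K) + 1) * (2 * m + 3)) * Pm α (m + 1) m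
        - h₁ α m := by
  have hN : (m + 1) + (m + 2) + 1 = 2 * m + 4 := by omega
  rw [Pm_eq_S, hN, key1 α m, S_add, S_add, S_C_mul, S_C_mul,
    S_deriv_sub _ (lt_of_le_of_lt (natDegree_h₁_le α m) (by omega)),
    Pm_eq_S' α m (m+1) _ (by omega), Pm_eq_S' α (m+1) m _ (by omega)]
  ring

lemma Pm_succ₂ (α : K) (m : ℕ) :
    Pm α (m + 2) (m + 1)
      = C (((m : K) + 1) * (2 * m + 3)) * Pm α m (m + 1)
        + C (((m : K) + 1) * (2 * m + 3 + α)) * Pm α (m + 1) m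
        - h₂ α m := by
  have hN : (m + 2) + (m + 1) + 1 = 2 * m + 4 := by omega
  rw [Pm_eq_S, hN, key2 α m, S_add, S_add, S_C_mul, S_C_mul,
    S_deriv_sub _ (lt_of_le_of_lt (natDegree_h₂_le α m) (by omega)),
    Pm_eq_S' α m (m+1) _ (by omega), Pm_eq_S' α (m+1) m _ (by omega)]
  ring

lemma h₁_eval_zero (α : K) (m : ℕ) : (h₁ α m).eval 0 = 0 := by
  simp [h₁]

lemma h₁_eval_alpha (α : K) (m : ℕ) : (h₁ α m).eval α = 0 := by
  simp [h₁]

lemma h₂_eval_zero (α : K) (m : ℕ) : (h₂ α m).eval 0 = 0 := by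
  simp [h₂]

lemma h₂_eval_alpha (α : K) (m : ℕ) : (h₂ α m).eval α = 0 := by
  simp [h₂]

lemma base0 (α : K) :
    !![(Pm α 0 1).eval 0, (Pm α 0 1).eval α;
       (Pm α 1 0).eval 0, (Pm α 1 0).eval α] = Cmat α 1 := by
  have e1 : Pm α 0 1 = (X - C α) + 1 := by
    simp [Pm, fm, Finset.sum_range_succ]
    ring
  have e2 : Pm α 1 0 = X + 1 := by
    simp [Pm, fm, Finset.sum_range_succ]
  rw [e1, e2, Cmat]
  ext i j
  fin_cases i <;> fin_cases j <;> simp <;> ring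

lemma stmt18' (α : K) (m : ℕ) :
    !![(Pm α m (m + 1)).eval 0, (Pm α m (m + 1)).eval α;
       (Pm α (m + 1) m).eval 0, (Pm α (m + 1) m).eval α] =
      (m.factorial : K) •
        (((List.range (m + 1)).map fun i => Cmat α (i + 1)).reverse.prod) := by
  induction m with
  | zero =>
      have := base0 α
      simp only [List.range_succ, List.range_zero, List.map_nil, List.map_append,
        List.map_cons, List.nil_append, List.reverse_cons, List.reverse_nil,
        List.prod_cons, List.prod_nil, mul_one, Nat.factorial_zero, Nat.cast_one, one_smul]
      simpa using this
  | succ m ih =>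
      show !![(Pm α (m + 1) (m + 2)).eval 0, (Pm α (m + 1) (m + 2)).eval α;
              (Pm α (m + 2) (m + 1)).eval 0, (Pm α (m + 2) (m + 1)).eval α] =
        ((m + 1).factorial : K) •
          (((List.range (m + 2)).map fun i => Cmat α (i + 1)).reverse.prod)
      have hlist : ((List.range (m + 2)).map fun i => Cmat α (i + 1)).reverse.prod
          = Cmat α (m + 2) * ((List.range (m + 1)).map fun i => Cmat α (i + 1)).reverse.prod := by
        rw [List.range_succ, List.map_append, List.reverse_append]
        simp
      rw [hlist, Nat.factorial_succ]
      push_cast [mul_smul]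
      rw [← Matrix.mul_smul, ← ih]
      ext i j
      rw [Pm_succ₁, Pm_succ₂]
      fin_cases i <;> fin_cases j <;>
        · simp only [Matrix.smul_apply, Matrix.mul_apply, Fin.sum_univ_two, Cmat,
            Matrix.of_apply, Matrix.cons_val', Matrix.cons_val_zero, Matrix.cons_val_one,
            Matrix.head_cons, Matrix.head_fin_const, Matrix.empty_val', Matrix.cons_val_fin_one,
            Fin.mk_zero, Fin.mk_one, Fin.isValue,
            eval_sub, eval_add, eval_mul, eval_C,
            h₁_eval_zero, h₁_eval_alpha, h₂_eval_zero, h₂_eval_alpha, smul_eq_mul]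
          push_cast
          ring

end Stmt18Aux

/-- For `s = 2`, `α₁ = 0`, `α₂ = α ≠ 0`, and every `n ≥ 1`:
`[[P_{(n−1,n)}(0), P_{(n−1,n)}(α)], [P_{(n,n−1)}(0), P_{(n,n−1)}(α)]]
  = (n−1)! · C_n C_{n−1} ⋯ C₁`. -/
theorem stmt18 {K : Type*} [Field K] [CharZero K] (α : K) (hα : α ≠ 0)
    (n : ℕ) (hn : 1 ≤ n) :
    !![(Pm α (n - 1) n).eval 0, (Pm α (n - 1) n).eval α;
       (Pm α n (n - 1)).eval 0, (Pm α n (n - 1)).eval α] =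
      ((n - 1).factorial : K) •
        (((List.range n).map fun i => Cmat α (i + 1)).reverse.prod) := by
  obtain ⟨m, rfl⟩ := Nat.exists_eq_add_of_le hn
  have h1 : 1 + m - 1 = m := by omega
  have h2 : 1 + m = m + 1 := by omega
  rw [h1, h2]
  exact Stmt18Aux.stmt18' α m
end
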